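/- arXiv:1611.00712 — 8 statements merged into one kernel-verified Lean document; each statement's English description precedes it below -/
import Mathlib

section
/- (Gumbel-Max trick, n-ary case) Let α₁,…,αₙ > 0 and let G₁,…,Gₙ be i.i.d. standard Gumbel random variables. Then for each k, P(log αₖ + Gₖ > log αᵢ + Gᵢ for all i ≠ k) = αₖ / (α₁ + ⋯ + αₙ). -/
open MeasureTheory Real Set Filter

noncomputable def gpdf (b : ℝ) (x : ℝ) : ℝ := Real.exp (-x) * Real.exp (-(b * Real.exp (-x)))

lemma gpdf_nonneg (b x : ℝ) : 0 ≤ gpdf b x := by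
  unfold gpdf; positivity

lemma continuous_gpdf (b : ℝ) : Continuous (gpdf b) := by
  unfold gpdf; fun_prop

lemma hasDerivAt_gF (b x : ℝ) (hb : b ≠ 0) :
    HasDerivAt (fun x => b⁻¹ * Real.exp (-(b * Real.exp (-x)))) (gpdf b x) x := by
  have h1 : HasDerivAt (fun x : ℝ => -x) (-1) x := (hasDerivAt_id x).neg
  have h2 : HasDerivAt (fun x : ℝ => Real.exp (-x)) (Real.exp (-x) * (-1)) x := h1.exp
  have h3 : HasDerivAt (fun x : ℝ => -(b * Real.exp (-x))) (-(b * (Real.exp (-x) * (-1)))) x :=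
    (h2.const_mul b).neg
  have h4 := (h3.exp).const_mul b⁻¹
  refine h4.congr_deriv ?_
  unfold gpdf
  field_simp

lemma tendsto_gF_atBot (b : ℝ) (hb : 0 < b) :
    Tendsto (fun x => b⁻¹ * Real.exp (-(b * Real.exp (-x)))) atBot (nhds 0) := by
  have h1 : Tendsto (fun x : ℝ => Real.exp (-x)) atBot atTop :=
    Real.tendsto_exp_atTop.comp tendsto_neg_atBot_atTop
  have h2 : Tendsto (fun x : ℝ => -(b * Real.exp (-x))) atBot atBot := by
    apply Filter.tendsto_neg_atTop_atBot.comp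
    exact (tendsto_const_mul_atTop_of_pos hb).mpr h1
  have h3 : Tendsto (fun x => Real.exp (-(b * Real.exp (-x)))) atBot (nhds 0) :=
    Real.tendsto_exp_atBot.comp h2
  simpa using h3.const_mul b⁻¹

lemma tendsto_gF_atTop (b : ℝ) :
    Tendsto (fun x => b⁻¹ * Real.exp (-(b * Real.exp (-x)))) atTop (nhds b⁻¹) := by
  have h1 : Tendsto (fun x : ℝ => Real.exp (-x)) atTop (nhds 0) :=
    Real.tendsto_exp_atBot.comp tendsto_neg_atTop_atBot
  have h2 : Tendsto (fun x : ℝ => -(b * Real.exp (-x))) atTop (nhds 0) := by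
    simpa using (h1.const_mul b).neg
  have h3 : Tendsto (fun x => Real.exp (-(b * Real.exp (-x)))) atTop (nhds 1) := by
    simpa [Function.comp_def] using (Real.continuous_exp.tendsto 0).comp h2
  simpa using h3.const_mul b⁻¹

lemma integrable_gpdf (b : ℝ) (hb : 0 < b) : Integrable (gpdf b) := by
  rw [← integrableOn_univ, ← Set.Iic_union_Ioi (a := (0:ℝ))]
  apply IntegrableOn.union
  · -- on Iic 0 : gpdf b x ≤ (4/b^2) * exp x
    apply Integrable.mono' (g := fun x => (4 / b ^ 2) * Real.exp x)
      ((integrableOn_exp_Iic 0).const_mul _)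
      ((continuous_gpdf b).aestronglyMeasurable.restrict)
    filter_upwards with x
    rw [Real.norm_of_nonneg (gpdf_nonneg b x)]
    have hy : 0 < b * Real.exp (-x) := by positivity
    set y := b * Real.exp (-x) with hy_def
    have key : Real.exp (-y) ≤ 4 / y ^ 2 := by
      have h4 : y / 2 ≤ Real.exp (y / 2) := by
        linarith [Real.add_one_le_exp (y / 2)]
      have h5 : (y / 2) ^ 2 ≤ Real.exp (y / 2) ^ 2 :=
        pow_le_pow_left₀ (by positivity) h4 2
      have h6 : Real.exp (y / 2) ^ 2 = Real.exp y := by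
        rw [sq, ← Real.exp_add]; ring_nf
      have expand : y ^ 2 / 4 ≤ Real.exp y := by
        have : (y / 2) ^ 2 = y ^ 2 / 4 := by ring
        linarith
      rw [Real.exp_neg]
      have h0 : (0:ℝ) < y ^ 2 / 4 := by positivity
      calc (Real.exp y)⁻¹ ≤ (y ^ 2 / 4)⁻¹ := inv_anti₀ h0 expand
        _ = 4 / y ^ 2 := by field_simp
    calc gpdf b x ≤ Real.exp (-x) * (4 / y ^ 2) := by
          apply mul_le_mul_of_nonneg_left key (Real.exp_pos _).le
      _ = 4 / b ^ 2 * Real.exp x := by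
          rw [hy_def, mul_pow, Real.exp_neg]
          have hx := Real.exp_ne_zero x
          field_simp
  · -- on Ioi 0 : gpdf b x ≤ exp (-x)
    apply Integrable.mono' (g := fun x => Real.exp (-(1:ℝ) * x))
      (exp_neg_integrableOn_Ioi 0 one_pos)
      ((continuous_gpdf b).aestronglyMeasurable.restrict)
    filter_upwards with x
    rw [Real.norm_of_nonneg (gpdf_nonneg b x)]
    have : Real.exp (-(b * Real.exp (-x))) ≤ 1 := by
      apply Real.exp_le_one_iff.mpr
      have : 0 < b * Real.exp (-x) := by positivity
      linarith
    calc gpdf b x ≤ Real.exp (-x) * 1 := mul_le_mul_of_nonneg_left this (Real.exp_pos _).le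
      _ = Real.exp (-(1:ℝ) * x) := by rw [mul_one]; ring_nf

lemma integral_Iic_gpdf (b : ℝ) (hb : 0 < b) (a : ℝ) :
    ∫ x in Iic a, gpdf b x = b⁻¹ * Real.exp (-(b * Real.exp (-a))) := by
  rw [integral_Iic_of_hasDerivAt_of_tendsto' (fun x _ => hasDerivAt_gF b x hb.ne')
    (integrable_gpdf b hb).integrableOn (tendsto_gF_atBot b hb)]
  ring

lemma integral_gpdf (b : ℝ) (hb : 0 < b) : ∫ x, gpdf b x = b⁻¹ := by
  rw [integral_of_hasDerivAt_of_tendsto (fun x => hasDerivAt_gF b x hb.ne')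
    (integrable_gpdf b hb) (tendsto_gF_atBot b hb) (tendsto_gF_atTop b)]
  ring
noncomputable def gumbelμ : Measure ℝ :=
  MeasureTheory.volume.withDensity (fun x => ENNReal.ofReal (gpdf 1 x))

lemma gumbelμ_Iic (a : ℝ) : gumbelμ (Iic a) = ENNReal.ofReal (Real.exp (-Real.exp (-a))) := by
  rw [gumbelμ, withDensity_apply _ measurableSet_Iic,
    ← ofReal_integral_eq_lintegral_ofReal ((integrable_gpdf 1 one_pos).integrableOn)
      (Filter.Eventually.of_forall fun x => gpdf_nonneg 1 x),
    integral_Iic_gpdf 1 one_pos a]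
  norm_num

instance : IsProbabilityMeasure gumbelμ := by
  constructor
  rw [gumbelμ, withDensity_apply _ MeasurableSet.univ, Measure.restrict_univ,
    ← ofReal_integral_eq_lintegral_ofReal (integrable_gpdf 1 one_pos)
      (Filter.Eventually.of_forall fun x => gpdf_nonneg 1 x),
    integral_gpdf 1 one_pos]
  norm_num

lemma gumbelμ_singleton (a : ℝ) : gumbelμ {a} = 0 := by
  rw [gumbelμ, withDensity_apply _ (measurableSet_singleton a),
    Measure.restrict_eq_zero.mpr (Real.volume_singleton), lintegral_zero_measure]

lemma gumbelμ_Iio (a : ℝ) : gumbelμ (Iio a) = ENNReal.ofReal (Real.exp (-Real.exp (-a))) := by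
  rw [← gumbelμ_Iic a, ← Iic_diff_right, measure_diff_null (gumbelμ_singleton a)]

lemma lintegral_gumbel (s : ℝ) (hs : 0 ≤ s) :
    ∫⁻ t, ENNReal.ofReal (Real.exp (-(s * Real.exp (-t)))) ∂gumbelμ
      = ENNReal.ofReal ((1 + s)⁻¹) := by
  have hmeas : Measurable fun t => ENNReal.ofReal (Real.exp (-(s * Real.exp (-t)))) := by
    fun_prop
  rw [gumbelμ, lintegral_withDensity_eq_lintegral_mul _ (by exact ((continuous_gpdf 1).measurable).ennreal_ofReal) hmeas]
  have heq : ∀ t : ℝ,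
      ((fun x => ENNReal.ofReal (gpdf 1 x)) * fun t => ENNReal.ofReal (Real.exp (-(s * Real.exp (-t))))) t
        = ENNReal.ofReal (gpdf (1 + s) t) := by
    intro t
    simp only [Pi.mul_apply, ← ENNReal.ofReal_mul (gpdf_nonneg 1 t)]
    congr 1
    unfold gpdf
    rw [mul_assoc, ← Real.exp_add]
    congr 2
    ring
  simp_rw [heq]
  rw [← ofReal_integral_eq_lintegral_ofReal (integrable_gpdf (1 + s) (by linarith))
      (Filter.Eventually.of_forall fun x => gpdf_nonneg _ x),
    integral_gpdf (1 + s) (by linarith)]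
open ProbabilityTheory in
set_option maxHeartbeats 1000000 in
theorem gumbel_max_nary
    {Ω : Type*} [MeasurableSpace Ω] (P : Measure Ω) [IsProbabilityMeasure P]
    (n : ℕ) (α : Fin n → ℝ) (hα : ∀ i, 0 < α i)
    (G : Fin n → Ω → ℝ) (hG : ∀ i, Measurable (G i))
    (hIndep : iIndepFun G P)
    (hGumbel : ∀ i, ∀ g : ℝ,
      P {ω | G i ω ≤ g} = ENNReal.ofReal (Real.exp (-Real.exp (-g)))) :
    ∀ k : Fin n,
      P {ω | ∀ i, i ≠ k → Real.log (α i) + G i ω < Real.log (α k) + G k ω}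
        = ENNReal.ofReal (α k / ∑ i, α i) := by
  intro k
  classical
  set T : Ω → (Fin n → ℝ) := fun ω i => G i ω with hT
  have hTmeas : Measurable T := measurable_pi_lambda _ hG
  haveI : ∀ i : Fin n, IsProbabilityMeasure (P.map (G i)) :=
    fun i => Measure.isProbabilityMeasure_map (hG i).aemeasurable
  have hlaw : ∀ i, P.map (G i) = gumbelμ := by
    intro i
    refine Measure.ext_of_Iic (P.map (G i)) gumbelμ fun a => ?_
    rw [Measure.map_apply (hG i) measurableSet_Iic, gumbelμ_Iic]
    exact hGumbel i a
  have hjoint : P.map T = Measure.pi (fun _ : Fin n => gumbelμ) := by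
    refine (Measure.pi_eq (μ := fun _ : Fin n => gumbelμ) fun s hs => ?_).symm
    rw [Measure.map_apply hTmeas (MeasurableSet.univ_pi hs)]
    have hset : T ⁻¹' (Set.pi Set.univ s) = ⋂ i ∈ Finset.univ, G i ⁻¹' s i := by
      ext ω; simp [Set.mem_pi, T]
    rw [hset, hIndep.measure_inter_preimage_eq_mul Finset.univ (fun i _ => hs i)]
    refine Finset.prod_congr rfl fun i _ => ?_
    rw [← hlaw i, Measure.map_apply (hG i) (hs i)]
  set c : Fin n → ℝ := fun i => Real.log (α k) - Real.log (α i) with hc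
  set S : Set (Fin n → ℝ) := {x | ∀ i : Fin n, i ≠ k → x i < c i + x k} with hS
  have hSmeas : MeasurableSet S := by
    have : S = ⋂ i : Fin n, {x : Fin n → ℝ | i ≠ k → x i < c i + x k} := by
      ext x; simp [hS, Set.mem_iInter]
    rw [this]
    refine MeasurableSet.iInter fun i => ?_
    by_cases hik : i = k
    · have : {x : Fin n → ℝ | i ≠ k → x i < c i + x k} = Set.univ := by
        ext x; simp [hik]
      rw [this]; exact MeasurableSet.univ
    · have : {x : Fin n → ℝ | i ≠ k → x i < c i + x k} = {x | x i < c i + x k} := by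
        ext x; simp [hik]
      rw [this]
      exact measurableSet_lt (measurable_pi_apply i)
        (measurable_const.add (measurable_pi_apply k))
  have hevent : {ω | ∀ i, i ≠ k → Real.log (α i) + G i ω < Real.log (α k) + G k ω}
      = T ⁻¹' S := by
    ext ω
    simp only [Set.mem_preimage, Set.mem_setOf_eq, hS, hT, hc]
    constructor
    · intro h i hik; have := h i hik; linarith
    · intro h i hik; have := h i hik; linarith
  rw [hevent, ← Measure.map_apply hTmeas hSmeas, hjoint]
  -- split off coordinate k
  set p : Fin n → Prop := fun i => i = k with hp
  letI hu : Unique {i : Fin n // p i} := ⟨⟨⟨k, rfl⟩⟩, fun j => Subtype.ext j.2⟩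
  have hmp := measurePreserving_piEquivPiSubtypeProd (fun _ : Fin n => gumbelμ) p
  set s0 : ℝ := ∑ j : {i : Fin n // ¬ p i}, α j / α k with hs0
  have hs0nonneg : 0 ≤ s0 := by
    rw [hs0]
    exact Finset.sum_nonneg fun j _ => div_nonneg (hα _).le (hα k).le
  set T' : Set ((∀ _ : {i : Fin n // p i}, ℝ) × (∀ _ : {i : Fin n // ¬ p i}, ℝ)) :=
    {q | ∀ j : {i : Fin n // ¬ p i}, q.2 j < c j + q.1 ⟨k, rfl⟩} with hT'
  have hT'meas : MeasurableSet T' := by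
    have : T' = ⋂ j : {i : Fin n // ¬ p i},
        {q : (∀ _ : {i : Fin n // p i}, ℝ) × (∀ _ : {i : Fin n // ¬ p i}, ℝ) |
          q.2 j < c j + q.1 ⟨k, rfl⟩} := by
      ext q; simp [hT', Set.mem_iInter]
    rw [this]
    exact MeasurableSet.iInter fun j => measurableSet_lt (by fun_prop) (by fun_prop)
  have hpre : S = (MeasurableEquiv.piEquivPiSubtypeProd (fun _ : Fin n => ℝ) p) ⁻¹' T' := by
    ext x
    constructor
    · intro h j
      exact h j j.2
    · intro h i hik
      exact h ⟨i, hik⟩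
  rw [hpre, ← Measure.map_apply (MeasurableEquiv.measurable _) hT'meas, hmp.map_eq,
    Measure.prod_apply hT'meas]
  have hinner : ∀ u : (∀ _ : {i : Fin n // p i}, ℝ),
      (Measure.pi fun _ : {i : Fin n // ¬ p i} => gumbelμ) (Prod.mk u ⁻¹' T')
        = ENNReal.ofReal (Real.exp (-(s0 * Real.exp (-(u ⟨k, rfl⟩))))) := by
    intro u
    have hset : Prod.mk u ⁻¹' T'
        = Set.pi Set.univ (fun j : {i : Fin n // ¬ p i} => Iio (c j + u ⟨k, rfl⟩)) := by
      ext y; simp [hT', Set.mem_pi]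
    rw [hset, Measure.pi_pi]
    simp_rw [gumbelμ_Iio]
    rw [← ENNReal.ofReal_prod_of_nonneg (fun j _ => (Real.exp_pos _).le)]
    congr 1
    rw [← Real.exp_sum]
    congr 1
    have hterm : ∀ j : {i : Fin n // ¬ p i},
        -Real.exp (-(c ↑j + u ⟨k, rfl⟩)) = -(α ↑j / α k * Real.exp (-(u ⟨k, rfl⟩))) := by
      intro j
      have hcj : Real.exp (-(c ↑j)) = α ↑j / α k := by
        rw [hc, neg_sub, Real.exp_sub, Real.exp_log (hα _), Real.exp_log (hα _)]
      rw [neg_add, Real.exp_add, hcj]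
    calc ∑ j : {i : Fin n // ¬ p i}, -Real.exp (-(c ↑j + u ⟨k, rfl⟩))
        = ∑ j : {i : Fin n // ¬ p i}, -(α ↑j / α k * Real.exp (-(u ⟨k, rfl⟩))) :=
          Finset.sum_congr rfl fun j _ => hterm j
      _ = -(s0 * Real.exp (-(u ⟨k, rfl⟩))) := by
          rw [hs0, Finset.sum_neg_distrib, Finset.sum_mul]
  rw [lintegral_congr hinner]
  have hHmeas : Measurable (fun t : ℝ => ENNReal.ofReal (Real.exp (-(s0 * Real.exp (-t))))) := by
    fun_prop
  have hmp2 := measurePreserving_piUnique (fun _ : {i : Fin n // p i} => gumbelμ)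
  have hstep : (∫⁻ u : ({i : Fin n // p i} → ℝ),
      ENNReal.ofReal (Real.exp (-(s0 * Real.exp (-(u ⟨k, rfl⟩))))) ∂(Measure.pi fun _ => gumbelμ))
      = ∫⁻ u : ({i : Fin n // p i} → ℝ),
        ENNReal.ofReal (Real.exp (-(s0 * Real.exp
          (-((MeasurableEquiv.piUnique fun _ : {i : Fin n // p i} => ℝ) u)))))
          ∂(Measure.pi fun _ => gumbelμ) :=
    lintegral_congr fun u => rfl
  have hchain := (hstep.trans ((hmp2.lintegral_comp hHmeas).trans
    (lintegral_gumbel s0 hs0nonneg)))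
  -- final arithmetic
  have hsumpos : 0 < ∑ i, α i :=
    Finset.sum_pos (fun i _ => hα i) ⟨k, Finset.mem_univ k⟩
  have hsub : ∑ j : {i : Fin n // ¬ p i}, α ↑j = ∑ x ∈ Finset.univ.erase k, α x :=
    (Finset.sum_subtype (Finset.univ.erase k) (fun x => by simp [hp]) α).symm
  have hsum : ∑ j : {i : Fin n // ¬ p i}, α ↑j = (∑ i, α i) - α k := by
    rw [hsub, ← Finset.sum_erase_add Finset.univ α (Finset.mem_univ k)]
    ring
  have h1s : (1 + s0)⁻¹ = α k / ∑ i, α i := by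
    rw [hs0, ← Finset.sum_div, hsum]
    have h2 : 1 + ((∑ i, α i) - α k) / α k = (∑ i, α i) / α k := by
      field_simp [(hα k).ne']
      ring
    rw [h2, inv_div]
  have hrest : ENNReal.ofReal ((1 + s0)⁻¹) = ENNReal.ofReal (α k / ∑ i, α i) := by
    rw [h1s]
  convert hchain.trans hrest using 2
  congr!
end

section
/- If G is standard Gumbel and c ∈ ℝ, then c + G is distributed as -log E where E is an exponential random variable with rate exp(c); consequently the argmax over k of {log αₖ + Gₖ} has the same distribution as the argmin over k of independent exponential random variables with rates αₖ. -/
open MeasureTheory Real ProbabilityTheory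

open Filter Topology in
private lemma cdf_lt_of_cont {Ω : Type*} [MeasurableSpace Ω] (P : Measure Ω)
    (X : Ω → ℝ) (F : ℝ → ℝ) (hF : Continuous F)
    (h : ∀ x, P {ω | X ω ≤ x} = ENNReal.ofReal (F x)) (x : ℝ) :
    P {ω | X ω < x} = ENNReal.ofReal (F x) := by
  have hset : {ω | X ω < x} = ⋃ m : ℕ, {ω | X ω ≤ x - 1/(m+1)} := by
    ext ω
    simp only [Set.mem_setOf_eq, Set.mem_iUnion]
    constructor
    · intro hω
      obtain ⟨m, hm⟩ := exists_nat_one_div_lt (sub_pos.2 hω)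
      exact ⟨m, by linarith⟩
    · rintro ⟨m, hm⟩
      have h0 : (0:ℝ) < 1/(m+1) := by positivity
      linarith
  have hmono : Monotone (fun m : ℕ => {ω | X ω ≤ x - 1/(m+1)}) := by
    intro a b hab ω hω
    simp only [Set.mem_setOf_eq] at hω ⊢
    have h1 : (1:ℝ)/(b+1) ≤ 1/(a+1) := by
      apply one_div_le_one_div_of_le (by positivity)
      have : (a:ℝ) ≤ b := by exact_mod_cast hab
      linarith
    linarith
  rw [hset, Directed.measure_iUnion hmono.directed_le]
  have hlim : Tendsto (fun m : ℕ => P {ω | X ω ≤ x - 1/(m+1)}) atTop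
      (nhds (ENNReal.ofReal (F x))) := by
    simp only [h]
    apply (ENNReal.continuous_ofReal.tendsto (F x)).comp
    apply (hF.tendsto x).comp
    have h2 : Tendsto (fun m : ℕ => x - 1/(m+1 : ℝ)) atTop (nhds (x - 0)) :=
      tendsto_const_nhds.sub tendsto_one_div_add_atTop_nhds_zero_nat
    simpa using h2
  exact tendsto_nhds_unique (tendsto_atTop_iSup (fun a b hab => measure_mono (hmono hab))) hlim

private lemma cdf_ge_of_cont {Ω : Type*} [MeasurableSpace Ω] (P : Measure Ω)
    [IsProbabilityMeasure P]
    (X : Ω → ℝ) (hX : Measurable X) (F : ℝ → ℝ) (hF : Continuous F) (hF0 : ∀ x, 0 ≤ F x)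
    (h : ∀ x, P {ω | X ω ≤ x} = ENNReal.ofReal (F x)) (x : ℝ) :
    P {ω | x ≤ X ω} = ENNReal.ofReal (1 - F x) := by
  have hs : {ω | x ≤ X ω} = {ω | X ω < x}ᶜ := by ext ω; simp [not_lt]
  rw [hs, prob_compl_eq_one_sub (measurableSet_lt hX measurable_const),
      cdf_lt_of_cont P X F hF h, ENNReal.ofReal_sub _ (hF0 x), ENNReal.ofReal_one]

private lemma map_eq_pi {Ω : Type*} [MeasurableSpace Ω] (P : Measure Ω)
    [IsProbabilityMeasure P] {n : ℕ}
    (X : Fin n → Ω → ℝ) (hX : ∀ i, Measurable (X i))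
    (hind : iIndepFun X P) :
    P.map (fun ω i => X i ω) = Measure.pi (fun i => P.map (X i)) := by
  haveI : ∀ i, IsProbabilityMeasure (P.map (X i)) :=
    fun i => Measure.isProbabilityMeasure_map (hX i).aemeasurable
  refine (Measure.pi_eq ?_).symm
  intro s hs
  rw [Measure.map_apply (measurable_pi_lambda _ hX) (MeasurableSet.univ_pi hs)]
  have hpre : (fun ω i => X i ω) ⁻¹' Set.pi Set.univ s = ⋂ i ∈ Finset.univ, X i ⁻¹' s i := by
    ext ω; simp [Set.mem_pi]
  rw [hpre, hind.measure_inter_preimage_eq_mul Finset.univ (fun i _ => hs i)]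
  exact Finset.prod_congr rfl fun i _ => (Measure.map_apply (hX i) (hs i)).symm

/-- If `G` is standard Gumbel and `c ∈ ℝ`, then `c + G` is distributed as `-log E` where
`E` is exponential with rate `exp c`; consequently the argmax of `log αₖ + Gₖ` has the
same distribution as the argmin of independent exponentials with rates `αₖ`. -/
theorem gumbel_shift_exponential
    {Ω : Type*} [MeasurableSpace Ω] (P : Measure Ω) [IsProbabilityMeasure P]
    {Ω' : Type*} [MeasurableSpace Ω'] (P' : Measure Ω') [IsProbabilityMeasure P']
    (c : ℝ) (G : Ω → ℝ) (hG : Measurable G)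
    (hGumbel : ∀ g : ℝ, P {ω | G ω ≤ g} = ENNReal.ofReal (Real.exp (-Real.exp (-g))))
    (E : Ω' → ℝ) (hE : Measurable E)
    (hExp : ∀ x : ℝ, P' {ω | E ω ≤ x}
      = ENNReal.ofReal (1 - Real.exp (-(Real.exp c) * max x 0)))
    (n : ℕ) (α : Fin n → ℝ) (hα : ∀ i, 0 < α i)
    (Gs : Fin n → Ω → ℝ) (hGs : ∀ i, Measurable (Gs i))
    (hGsIndep : iIndepFun Gs P)
    (hGsGumbel : ∀ i, ∀ g : ℝ,
      P {ω | Gs i ω ≤ g} = ENNReal.ofReal (Real.exp (-Real.exp (-g))))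
    (Es : Fin n → Ω' → ℝ) (hEs : ∀ i, Measurable (Es i))
    (hEsIndep : iIndepFun Es P')
    (hEsExp : ∀ i, ∀ x : ℝ, P' {ω | Es i ω ≤ x}
      = ENNReal.ofReal (1 - Real.exp (-(α i) * max x 0))) :
    (∀ t : ℝ, P {ω | c + G ω ≤ t} = P' {ω | -Real.log (E ω) ≤ t}) ∧
    (∀ k : Fin n,
      P {ω | ∀ i, i ≠ k → Real.log (α i) + Gs i ω < Real.log (α k) + Gs k ω}
        = P' {ω | ∀ i, i ≠ k → Es k ω < Es i ω}) := by
  -- continuity of exponential CDFs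
  have hFexpCont : ∀ lam : ℝ, Continuous (fun x : ℝ => 1 - Real.exp (-lam * max x 0)) :=
    fun lam => continuous_const.sub
      (((continuous_const.mul ((continuous_id.max continuous_const))).rexp))
  have hFexpNonneg : ∀ lam : ℝ, 0 < lam → ∀ x : ℝ, 0 ≤ 1 - Real.exp (-lam * max x 0) := by
    intro lam hlam x
    have : Real.exp (-lam * max x 0) ≤ 1 := by
      rw [Real.exp_le_one_iff]
      have : 0 ≤ max x 0 := le_max_right x 0
      nlinarith
    linarith
  constructor
  · -- Part 1
    intro t
    have hL : P {ω | c + G ω ≤ t}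
        = ENNReal.ofReal (Real.exp (-(Real.exp c * Real.exp (-t)))) := by
      have hset : {ω | c + G ω ≤ t} = {ω | G ω ≤ t - c} := by
        ext ω; simp [Set.mem_setOf_eq]; constructor <;> intro <;> linarith
      rw [hset, hGumbel]
      congr 2
      rw [neg_sub, ← Real.exp_add]
      ring_nf
    rw [hL]
    -- a.e. positivity of E
    have hE0 : P' {ω | E ω ≤ 0} = 0 := by
      have := hExp 0
      simpa using this
    have hpos : ∀ᵐ ω ∂P', 0 < E ω := by
      rw [ae_iff]
      have : {ω | ¬ 0 < E ω} = {ω | E ω ≤ 0} := by ext ω; simp [not_lt]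
      rw [this]; exact hE0
    have haeeq : {ω | -Real.log (E ω) ≤ t} =ᵐ[P'] {ω | Real.exp (-t) ≤ E ω} := by
      rw [Filter.eventuallyEq_set]
      filter_upwards [hpos] with ω hω
      show -Real.log (E ω) ≤ t ↔ Real.exp (-t) ≤ E ω
      rw [neg_le, ← Real.le_log_iff_exp_le hω]
    rw [measure_congr haeeq]
    rw [cdf_ge_of_cont P' E hE _ (hFexpCont (Real.exp c))
        (hFexpNonneg _ (Real.exp_pos c)) hExp]
    congr 1
    have hx : max (Real.exp (-t)) 0 = Real.exp (-t) := max_eq_left (Real.exp_pos _).le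
    rw [hx]
    ring_nf
  · -- Part 2
    intro k
    set T : Fin n → Ω → ℝ := fun i ω => Real.exp (-(Real.log (α i) + Gs i ω)) with hT
    have hTmeas : ∀ i, Measurable (T i) :=
      fun i => (((hGs i).const_add _).neg).exp
    have hTindep : iIndepFun T P :=
      hGsIndep.comp (fun i x => Real.exp (-(Real.log (α i) + x)))
        (fun i => ((measurable_const.add measurable_id).neg).exp)
    -- CDF of T i is exponential with rate α i
    have hTcdf : ∀ i x, P {ω | T i ω ≤ x}
        = ENNReal.ofReal (1 - Real.exp (-(α i) * max x 0)) := by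
      intro i x
      rcases le_or_gt x 0 with hx | hx
      · have hempty : {ω | T i ω ≤ x} = ∅ := by
          ext ω
          simp only [Set.mem_setOf_eq, Set.mem_empty_iff_false, iff_false, not_le]
          exact lt_of_le_of_lt hx (Real.exp_pos _)
        rw [hempty, measure_empty, max_eq_right hx]
        simp
      · have hset : {ω | T i ω ≤ x} = {ω | -Real.log x - Real.log (α i) ≤ Gs i ω} := by
          ext ω
          simp only [hT, Set.mem_setOf_eq]
          rw [← Real.le_log_iff_exp_le hx]
          constructor <;> intro <;> linarith
        rw [hset, cdf_ge_of_cont P (Gs i) (hGs i) (fun g => Real.exp (-Real.exp (-g)))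
            (by continuity) (fun g => (Real.exp_pos _).le) (hGsGumbel i)]
        congr 2
        rw [neg_sub, sub_neg_eq_add, Real.exp_add, Real.exp_log hx, Real.exp_log (hα i),
            max_eq_left hx.le]
        ring
    -- laws of T i and Es i agree
    have hlaw : ∀ i, P.map (T i) = P'.map (Es i) := by
      intro i
      refine MeasureTheory.Measure.ext_of_Iic _ _ (fun x => ?_)
      rw [Measure.map_apply (hTmeas i) measurableSet_Iic,
          Measure.map_apply (hEs i) measurableSet_Iic]
      show P {ω | T i ω ≤ x} = P' {ω | Es i ω ≤ x}
      rw [hTcdf i x, hEsExp i x]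
    -- the argmin set
    set S : Set (Fin n → ℝ) := {v | ∀ i, i ≠ k → v k < v i} with hS
    have hSmeas : MeasurableSet S := by
      have : S = ⋂ i, ⋂ (_ : i ≠ k), {v : Fin n → ℝ | v k < v i} := by
        ext v; simp [hS]
      rw [this]
      exact MeasurableSet.iInter fun i => MeasurableSet.iInter fun _ =>
        measurableSet_lt (measurable_pi_apply k) (measurable_pi_apply i)
    have hEvT : {ω | ∀ i, i ≠ k → Real.log (α i) + Gs i ω < Real.log (α k) + Gs k ω}
        = (fun ω i => T i ω) ⁻¹' S := by
      ext ω
      simp only [Set.mem_setOf_eq, Set.mem_preimage, hS, hT]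
      refine forall_congr' fun i => imp_congr_right fun _ => ?_
      rw [Real.exp_lt_exp, neg_lt_neg_iff]
    have hEvE : {ω | ∀ i, i ≠ k → Es k ω < Es i ω} = (fun ω i => Es i ω) ⁻¹' S := by
      ext ω; simp [hS]
    rw [hEvT, hEvE,
        ← Measure.map_apply (measurable_pi_lambda _ hTmeas) hSmeas,
        ← Measure.map_apply (measurable_pi_lambda _ hEs) hSmeas,
        map_eq_pi P T hTmeas hTindep, map_eq_pi P' Es hEs hEsIndep]
    have hfe : (fun i => P.map (T i)) = fun i => P'.map (Es i) := funext hlaw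
    rw [hfe]
end

section
/- (Rounding property) If X ~ Concrete(α, λ), then P(Xₖ > Xᵢ for all i ≠ k) = αₖ / (∑ᵢ αᵢ). -/
open MeasureTheory Real ProbabilityTheory Set Filter Topology

lemma crd_hasDerivAt (c : ℝ) (hc : c ≠ 0) (x : ℝ) :
    HasDerivAt (fun x => exp (-(c * exp (-x))) / c)
      (exp (-x) * exp (-(c * exp (-x)))) x := by
  have h1 : HasDerivAt (fun x : ℝ => exp (-x)) (-exp (-x)) x := by
    simpa using ((hasDerivAt_neg x).exp)
  have h2 : HasDerivAt (fun x : ℝ => -(c * exp (-x))) (-(c * -exp (-x))) x :=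
    ((h1.const_mul c)).neg
  have h3 := h2.exp.div_const c
  refine h3.congr_deriv ?_
  rw [div_eq_iff hc]
  ring

lemma crd_integrable_abs : Integrable (fun x : ℝ => exp (-|x|)) := by
  have h1 : IntegrableOn (fun x : ℝ => exp (-|x|)) (Iic 0) := by
    apply (integrableOn_exp_Iic 0).congr_fun ?_ measurableSet_Iic
    intro x hx
    simp [abs_of_nonpos (mem_Iic.1 hx)]
  have h2 : IntegrableOn (fun x : ℝ => exp (-|x|)) (Ioi 0) := by
    have := exp_neg_integrableOn_Ioi 0 (by norm_num : (0:ℝ) < 1)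
    apply this.congr_fun ?_ measurableSet_Ioi
    intro x hx
    simp [abs_of_pos (mem_Ioi.1 hx)]
  have h3 := h1.union h2
  rw [Iic_union_Ioi] at h3
  exact integrableOn_univ.1 h3

lemma crd_integrable {c : ℝ} (hc : 1 ≤ c) :
    Integrable (fun x : ℝ => exp (-x) * exp (-(c * exp (-x)))) := by
  have hbound : ∀ x : ℝ, ‖exp (-x) * exp (-(c * exp (-x)))‖ ≤ 4 * exp (-|x|) := by
    intro x
    have h0 : (0:ℝ) < exp (-x) := exp_pos _
    have h1 : exp (-(c * exp (-x))) ≤ exp (-(exp (-x))) := by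
      apply exp_le_exp.2
      nlinarith
    rw [Real.norm_eq_abs, abs_of_nonneg (by positivity)]
    rcases le_or_gt 0 x with hx | hx
    · rw [abs_of_nonneg hx]
      have h2 : exp (-(exp (-x))) ≤ 1 := exp_le_one_iff.2 (neg_nonpos.2 h0.le)
      nlinarith
    · rw [abs_of_neg hx, neg_neg]
      set t := exp (-x) with ht
      have hxx : exp x = t⁻¹ := by rw [ht, ← Real.exp_neg, neg_neg]
      rw [hxx]
      have htpos : (0:ℝ) < t := exp_pos _
      have key : t * t * exp (-t) ≤ 4 := by
        have h4 : exp t = exp (t/2) * exp (t/2) := by rw [← Real.exp_add]; ring_nf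
        have h5 : t/2 + 1 ≤ exp (t/2) := Real.add_one_le_exp _
        have h7 : (0:ℝ) < exp t := exp_pos _
        rw [Real.exp_neg t, mul_inv_le_iff₀ h7]
        nlinarith [exp_pos (t/2)]
      rw [show (4:ℝ) * t⁻¹ = 4 / t from (div_eq_mul_inv 4 t).symm, le_div_iff₀ htpos]
      nlinarith [exp_pos (-t), exp_pos (-(c*t))]
  have hint : Integrable (fun x : ℝ => 4 * exp (-|x|)) := crd_integrable_abs.const_mul 4
  exact hint.mono' (Continuous.aestronglyMeasurable (by continuity))
    (Filter.Eventually.of_forall hbound)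

lemma crd_integral {c : ℝ} (hc : 1 ≤ c) :
    ∫ x : ℝ, exp (-x) * exp (-(c * exp (-x))) = 1 / c := by
  have hc0 : (0:ℝ) < c := lt_of_lt_of_le one_pos hc
  have hbot : Tendsto (fun x : ℝ => exp (-(c * exp (-x))) / c) atBot (𝓝 0) := by
    have h1 : Tendsto (fun x : ℝ => exp (-x)) atBot atTop :=
      Real.tendsto_exp_atTop.comp tendsto_neg_atBot_atTop
    have h2 : Tendsto (fun x : ℝ => -(c * exp (-x))) atBot atBot :=
      tendsto_neg_atTop_atBot.comp (h1.const_mul_atTop hc0)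
    have h3 : Tendsto (fun x : ℝ => exp (-(c * exp (-x)))) atBot (𝓝 0) :=
      Real.tendsto_exp_atBot.comp h2
    simpa using h3.div_const c
  have htop : Tendsto (fun x : ℝ => exp (-(c * exp (-x))) / c) atTop (𝓝 (1 / c)) := by
    have h1 : Tendsto (fun x : ℝ => exp (-x)) atTop (𝓝 0) :=
      Real.tendsto_exp_atBot.comp tendsto_neg_atTop_atBot
    have h2 : Tendsto (fun x : ℝ => -(c * exp (-x))) atTop (𝓝 (-(c * 0))) :=
      ((h1.const_mul c)).neg
    have h3 : Tendsto (fun x : ℝ => exp (-(c * exp (-x)))) atTop (𝓝 1) := by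
      have := (Real.continuous_exp.tendsto _).comp (by simpa using h2)
      simpa [Function.comp_def] using this
    simpa using h3.div_const c
  have := integral_of_hasDerivAt_of_tendsto (fun x => crd_hasDerivAt c hc0.ne' x)
    (crd_integrable hc) hbot htop
  simpa using this

noncomputable def gumbelM : Measure ℝ :=
  MeasureTheory.volume.withDensity (fun x => ENNReal.ofReal (exp (-x) * exp (-exp (-x))))

lemma crd_one : ∀ x : ℝ, exp (-x) * exp (-(1 * exp (-x))) = exp (-x) * exp (-exp (-x)) := by
  intro x; rw [one_mul]

lemma gumbel_integrable : Integrable (fun x : ℝ => exp (-x) * exp (-exp (-x))) := by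
  have := crd_integrable (le_refl 1)
  simpa only [one_mul] using this

lemma gumbel_hasDerivAt (x : ℝ) :
    HasDerivAt (fun x : ℝ => exp (-exp (-x))) (exp (-x) * exp (-exp (-x))) x := by
  have := crd_hasDerivAt 1 one_ne_zero x
  simpa only [one_mul, div_one] using this

lemma gumbel_tendsto_bot : Tendsto (fun x : ℝ => exp (-exp (-x))) atBot (𝓝 0) := by
  have h1 : Tendsto (fun x : ℝ => exp (-x)) atBot atTop :=
    Real.tendsto_exp_atTop.comp tendsto_neg_atBot_atTop
  exact Real.tendsto_exp_atBot.comp (tendsto_neg_atTop_atBot.comp h1)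

lemma gumbel_rho_meas : Measurable (fun x : ℝ => ENNReal.ofReal (exp (-x) * exp (-exp (-x)))) := by
  apply Measurable.ennreal_ofReal
  exact (Continuous.mul (by continuity) (by continuity)).measurable

lemma gumbelM_Iic (g : ℝ) : gumbelM (Iic g) = ENNReal.ofReal (exp (-exp (-g))) := by
  rw [gumbelM, withDensity_apply _ measurableSet_Iic]
  rw [← ofReal_integral_eq_lintegral_ofReal gumbel_integrable.integrableOn
    (Filter.Eventually.of_forall fun x => by positivity)]
  congr 1
  have := integral_Iic_of_hasDerivAt_of_tendsto' (a := g)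
    (fun x _ => gumbel_hasDerivAt x) gumbel_integrable.integrableOn gumbel_tendsto_bot
  rw [this, sub_zero]

lemma gumbelM_Iio (g : ℝ) : gumbelM (Iio g) = ENNReal.ofReal (exp (-exp (-g))) := by
  rw [← gumbelM_Iic]
  refine le_antisymm (measure_mono Iio_subset_Iic_self) ?_
  have hsub : Iic g ⊆ Iio g ∪ {g} := by
    intro x hx
    rcases lt_or_eq_of_le (mem_Iic.1 hx) with h | h
    · exact Or.inl h
    · exact Or.inr (by simp [h])
  have h0 : gumbelM {g} = 0 := by
    have : gumbelM ≪ MeasureTheory.volume := withDensity_absolutelyContinuous _ _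
    exact this (volume_singleton)
  calc gumbelM (Iic g) ≤ gumbelM (Iio g) + gumbelM {g} :=
        le_trans (measure_mono hsub) (measure_union_le _ _)
    _ = gumbelM (Iio g) := by rw [h0, add_zero]

lemma gumbelM_univ : gumbelM Set.univ = 1 := by
  rw [gumbelM, withDensity_apply _ MeasurableSet.univ, Measure.restrict_univ]
  rw [← ofReal_integral_eq_lintegral_ofReal gumbel_integrable
    (Filter.Eventually.of_forall fun x => by positivity)]
  have : ∫ x : ℝ, exp (-x) * exp (-exp (-x)) = 1 := by
    have := crd_integral (le_refl 1)
    simpa only [one_mul, div_one] using this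
  rw [this, ENNReal.ofReal_one]

instance : IsProbabilityMeasure gumbelM := ⟨gumbelM_univ⟩

lemma gumbel_lintegral {C : ℝ} (hC : 0 ≤ C) :
    ∫⁻ x : ℝ, ENNReal.ofReal (exp (-(C * exp (-x)))) ∂gumbelM
      = ENNReal.ofReal (1 / (1 + C)) := by
  have hfmeas : Measurable (fun x : ℝ => ENNReal.ofReal (exp (-(C * exp (-x))))) := by
    apply Measurable.ennreal_ofReal
    exact (Continuous.rexp (by continuity)).measurable
  rw [gumbelM, lintegral_withDensity_eq_lintegral_mul _ gumbel_rho_meas hfmeas]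
  have heq : ∀ x : ℝ,
      ((fun x => ENNReal.ofReal (exp (-x) * exp (-exp (-x)))) *
        fun x => ENNReal.ofReal (exp (-(C * exp (-x))))) x
      = ENNReal.ofReal (exp (-x) * exp (-((1 + C) * exp (-x)))) := by
    intro x
    simp only [Pi.mul_apply]
    rw [← ENNReal.ofReal_mul (by positivity)]
    congr 1
    rw [mul_assoc, ← Real.exp_add]
    congr 2
    ring
  rw [lintegral_congr heq]
  rw [← ofReal_integral_eq_lintegral_ofReal (crd_integrable (by linarith))
    (Filter.Eventually.of_forall fun x => by positivity)]
  rw [crd_integral (by linarith : (1:ℝ) ≤ 1 + C)]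

/-- Rounding property of the Concrete distribution. -/
theorem concrete_rounding
    {Ω : Type*} [MeasurableSpace Ω] (P : Measure Ω) [IsProbabilityMeasure P]
    (n : ℕ) (α : Fin n → ℝ) (hα : ∀ i, 0 < α i) (l : ℝ) (hl : 0 < l)
    (G : Fin n → Ω → ℝ) (hG : ∀ i, Measurable (G i))
    (hIndep : iIndepFun G P)
    (hGumbel : ∀ i, ∀ g : ℝ,
      P {ω | G i ω ≤ g} = ENNReal.ofReal (Real.exp (-Real.exp (-g))))
    (X : Fin n → Ω → ℝ)
    (hX : ∀ k ω, X k ω = Real.exp ((Real.log (α k) + G k ω) / l)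
        / ∑ i, Real.exp ((Real.log (α i) + G i ω) / l)) :
    ∀ k : Fin n,
      P {ω | ∀ i, i ≠ k → X i ω < X k ω} = ENNReal.ofReal (α k / ∑ i, α i) := by
  classical
  intro k
  -- the law of each G i is the Gumbel measure
  have hmapG : ∀ i, P.map (G i) = gumbelM := by
    intro i
    haveI : IsProbabilityMeasure (P.map (G i)) := Measure.isProbabilityMeasure_map (hG i).aemeasurable
    refine MeasureTheory.Measure.ext_of_Iic (P.map (G i)) gumbelM (fun a => ?_)
    rw [Measure.map_apply (hG i) measurableSet_Iic, gumbelM_Iic]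
    have : G i ⁻¹' Iic a = {ω | G i ω ≤ a} := rfl
    rw [this, hGumbel i a]
  have hGlt : ∀ (i : Fin n) (g : ℝ), P (G i ⁻¹' Iio g) = ENNReal.ofReal (exp (-exp (-g))) := by
    intro i g
    rw [← Measure.map_apply (hG i) measurableSet_Iio, hmapG i, gumbelM_Iio]
  -- rewrite the event
  set c : Fin n → ℝ := fun i => Real.log (α k) - Real.log (α i) with hc
  have hD : ∀ ω, 0 < ∑ i, Real.exp ((Real.log (α i) + G i ω) / l) :=
    fun ω => Finset.sum_pos (fun i _ => exp_pos _) ⟨k, Finset.mem_univ k⟩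
  have hset : {ω | ∀ i, i ≠ k → X i ω < X k ω}
      = {ω | ∀ i, i ≠ k → G i ω < c i + G k ω} := by
    ext ω
    simp only [Set.mem_setOf_eq]
    refine forall_congr' fun i => imp_congr_right fun hi => ?_
    rw [hX, hX, div_lt_div_iff_of_pos_right (hD ω), Real.exp_lt_exp,
      div_lt_div_iff_of_pos_right hl]
    simp only [hc]
    constructor <;> intro h <;> linarith
  rw [hset]
  -- independence of G k and the rest
  set T : Finset (Fin n) := {k}ᶜ with hT
  set V : Ω → (↥T → ℝ) := fun ω i => G i ω with hV
  have hVmeas : Measurable V := measurable_pi_lambda _ fun i => hG i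
  haveI : IsProbabilityMeasure (P.map V) := Measure.isProbabilityMeasure_map hVmeas.aemeasurable
  have hkT : IndepFun (G k) V P := by
    have h := hIndep.indepFun_finset {k} T (by simp [hT]) hG
    have h2 := h.comp
      (φ := fun v : (↥({k} : Finset (Fin n)) → ℝ) => v ⟨k, Finset.mem_singleton_self k⟩)
      (ψ := id) (measurable_pi_apply (X := fun _ : ↥({k} : Finset (Fin n)) => ℝ) ⟨k, Finset.mem_singleton_self k⟩) measurable_id
    exact h2
  have hmap : P.map (fun ω => (G k ω, V ω)) = (P.map (G k)).prod (P.map V) :=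
    (indepFun_iff_map_prod_eq_prod_map_map (hG k).aemeasurable hVmeas.aemeasurable).1 hkT
  set B : Set (ℝ × (↥T → ℝ)) := {p | ∀ i : ↥T, p.2 i < c i + p.1} with hB
  have hBmeas : MeasurableSet B := by
    have : B = ⋂ i : ↥T, {p : ℝ × (↥T → ℝ) | p.2 i < c i + p.1} := by
      ext p; simp [hB, Set.mem_iInter]
    rw [this]
    exact MeasurableSet.iInter fun i => measurableSet_lt
      (by fun_prop) (by fun_prop)
  have hmemT : ∀ i : Fin n, i ∈ T ↔ i ≠ k := by
    intro i; simp [hT]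
  have hpre : {ω | ∀ i, i ≠ k → G i ω < c i + G k ω} = (fun ω => (G k ω, V ω)) ⁻¹' B := by
    ext ω
    simp only [Set.mem_setOf_eq, Set.mem_preimage, hB, hV]
    constructor
    · intro h i
      exact h i.1 ((hmemT i.1).1 i.2)
    · intro h i hi
      exact h ⟨i, (hmemT i).2 hi⟩
  rw [hpre, ← Measure.map_apply ((hG k).prodMk hVmeas) hBmeas, hmap,
    Measure.prod_apply hBmeas]
  -- compute the slice measure
  set C : ℝ := (∑ i ∈ T, α i) / α k with hCdef
  have hC : 0 ≤ C := by
    apply div_nonneg _ (hα k).le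
    exact Finset.sum_nonneg fun i _ => (hα i).le
  have hslice : ∀ x : ℝ,
      (P.map V) (Prod.mk x ⁻¹' B) = ENNReal.ofReal (exp (-(C * exp (-x)))) := by
    intro x
    have hset2 : Prod.mk x ⁻¹' B = {y : ↥T → ℝ | ∀ i : ↥T, y i < c i + x} := rfl
    have hmeas2 : MeasurableSet {y : ↥T → ℝ | ∀ i : ↥T, y i < c i + x} := by
      have : {y : ↥T → ℝ | ∀ i : ↥T, y i < c i + x}
          = ⋂ i : ↥T, {y : ↥T → ℝ | y i < c i + x} := by
        ext y; simp [Set.mem_iInter]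
      rw [this]
      exact MeasurableSet.iInter fun i => measurableSet_lt (measurable_pi_apply i) measurable_const
    rw [hset2, Measure.map_apply hVmeas hmeas2]
    have hVpre : V ⁻¹' {y : ↥T → ℝ | ∀ i : ↥T, y i < c i + x}
        = ⋂ i ∈ T, G i ⁻¹' (Iio (c i + x)) := by
      ext ω
      simp only [Set.mem_preimage, Set.mem_setOf_eq, Set.mem_iInter, hV, Set.mem_Iio]
      constructor
      · intro h i hi; exact h ⟨i, hi⟩
      · intro h i; exact h i.1 i.2
    rw [hVpre, hIndep.measure_inter_preimage_eq_mul T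
      (sets := fun i => Iio (c i + x)) (fun i _ => measurableSet_Iio)]
    have hfac : ∀ i ∈ T, P (G i ⁻¹' Iio (c i + x))
        = ENNReal.ofReal (exp (-exp (-(c i + x)))) := fun i _ => hGlt i _
    rw [Finset.prod_congr rfl hfac,
      ← ENNReal.ofReal_prod_of_nonneg (fun i _ => (exp_pos _).le)]
    congr 1
    rw [← Real.exp_sum]
    congr 1
    have : ∀ i ∈ T, -exp (-(c i + x)) = -((α i / α k) * exp (-x)) := by
      intro i _
      rw [show -(c i + x) = (-c i) + (-x) by ring, Real.exp_add, hc]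
      rw [show -(Real.log (α k) - Real.log (α i)) = Real.log (α i) - Real.log (α k) by ring,
        Real.exp_sub, Real.exp_log (hα i), Real.exp_log (hα k)]
    rw [Finset.sum_congr rfl this, Finset.sum_neg_distrib, ← Finset.sum_mul,
      ← Finset.sum_div, hCdef]
  rw [lintegral_congr hslice, hmapG k, gumbel_lintegral hC]
  -- final arithmetic
  congr 1
  have hSsplit : ∑ i ∈ T, α i + α k = ∑ i, α i := by
    have := Finset.sum_add_sum_compl ({k} : Finset (Fin n)) α
    rw [Finset.sum_singleton] at this
    rw [hT]
    linarith
  have hS : 0 < ∑ i, α i := Finset.sum_pos (fun i _ => hα i) ⟨k, Finset.mem_univ k⟩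
  have h1 : 1 + C = (∑ i, α i) / α k := by
    rw [hCdef, ← hSsplit, add_div, div_self (hα k).ne']
    ring
  rw [h1, one_div_div]
end

section
/- (Zero temperature limit) Fix α ∈ (0,∞)ⁿ and i.i.d. standard Gumbels G₁,…,Gₙ, and define X(λ)ₖ = exp((log αₖ + Gₖ)/λ)/∑ᵢ exp((log αᵢ + Gᵢ)/λ). Then P(lim_{λ→0⁺} X(λ)ₖ = 1) = αₖ/(∑ᵢ αᵢ). -/
open MeasureTheory Real ProbabilityTheory Filter Set Topology

section GumbelAux

lemma gumbel_hasDerivAt_F (c t : ℝ) :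
    HasDerivAt (fun t => exp (-(c * exp (-t)))) (c * exp (-t - c * exp (-t))) t := by
  have h1 : HasDerivAt (fun t : ℝ => -(c * exp (-t))) (c * exp (-t)) t := by
    have := ((Real.hasDerivAt_exp (-t)).comp t (hasDerivAt_neg t)).const_mul c
    have h := this.neg
    simp only [Function.comp_def, mul_neg, mul_one, neg_neg] at h
    exact h
  have h2 := (Real.hasDerivAt_exp (-(c * exp (-t)))).comp t h1
  refine h2.congr_deriv ?_
  rw [show -t - c * exp (-t) = -(c * exp (-t)) + -t by ring, Real.exp_add]
  ring

lemma gumbel_sq_mul_exp_neg_le (y : ℝ) (hy : 0 ≤ y) : y ^ 2 * exp (-y) ≤ 4 := by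
  have h1 : y / 2 + 1 ≤ exp (y / 2) := Real.add_one_le_exp _
  have h2 : exp (y / 2) * exp (y / 2) = exp y := by rw [← Real.exp_add]; ring_nf
  have h3 : exp (-y) * exp y = 1 := by rw [← Real.exp_add]; simp
  nlinarith [Real.exp_pos (y / 2), Real.exp_pos (-y), Real.exp_pos y]

lemma gumbel_tendsto_F_top (c : ℝ) :
    Tendsto (fun t => exp (-(c * exp (-t)))) atTop (𝓝 1) := by
  have h : Tendsto (fun t : ℝ => -(c * exp (-t))) atTop (𝓝 0) := by
    simpa using ((Real.tendsto_exp_neg_atTop_nhds_zero.const_mul c).neg)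
  simpa [Function.comp_def] using (Real.continuous_exp.continuousAt (x := (0:ℝ))).tendsto.comp h

lemma gumbel_tendsto_F_bot {c : ℝ} (hc : 0 < c) :
    Tendsto (fun t => exp (-(c * exp (-t)))) atBot (𝓝 0) := by
  apply Real.tendsto_exp_atBot.comp
  have h : Tendsto (fun t : ℝ => c * exp (-t)) atBot atTop :=
    (Real.tendsto_exp_atTop.comp tendsto_neg_atBot_atTop).const_mul_atTop hc
  exact tendsto_neg_atBot_iff.mpr h

lemma gumbel_integrableOn_f' {c : ℝ} (hc : 0 < c) (s : Set ℝ) :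
    IntegrableOn (fun t => c * exp (-t - c * exp (-t))) s := by
  apply IntegrableOn.mono_set (t := univ) _ (subset_univ s)
  rw [← Iic_union_Ioi (a := (0:ℝ))]
  apply IntegrableOn.union
  · have hint : IntegrableOn (fun t => (4 / c) * exp t) (Iic (0:ℝ)) :=
      (integrableOn_exp_Iic 0).const_mul _
    apply Integrable.mono' hint
    · exact (Continuous.aestronglyMeasurable (by continuity)).restrict
    · filter_upwards with t
      rw [Real.norm_of_nonneg (by positivity)]
      have key := gumbel_sq_mul_exp_neg_le (c * exp (-t)) (by positivity)
      have h1 : exp (-t - c * exp (-t)) = exp (-t) * exp (-(c * exp (-t))) := by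
        rw [← Real.exp_add]; ring_nf
      have h3 : exp (-t) * exp t = 1 := by rw [← Real.exp_add]; simp
      rw [h1]
      rw [div_mul_eq_mul_div, le_div_iff₀ hc]
      nlinarith [Real.exp_pos t, Real.exp_pos (-t), Real.exp_pos (-(c * exp (-t)))]
  · exact integrableOn_Ioi_deriv_of_nonneg' (fun x _ => gumbel_hasDerivAt_F c x)
      (fun x _ => by positivity) (gumbel_tendsto_F_top c)

lemma gumbel_integral_f'_Iic {c : ℝ} (hc : 0 < c) (b : ℝ) :
    ∫ t in Iic b, c * exp (-t - c * exp (-t)) = exp (-(c * exp (-b))) := by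
  have := integral_Iic_of_hasDerivAt_of_tendsto' (a := b)
    (fun x _ => gumbel_hasDerivAt_F c x) (gumbel_integrableOn_f' hc _)
    (gumbel_tendsto_F_bot hc)
  simpa using this

lemma gumbel_integral_f'_univ {c : ℝ} (hc : 0 < c) :
    ∫ t, c * exp (-t - c * exp (-t)) = 1 := by
  have hint : Integrable (fun t => c * exp (-t - c * exp (-t))) := by
    rw [← integrableOn_univ]; exact gumbel_integrableOn_f' hc univ
  have := integral_of_hasDerivAt_of_tendsto (fun x => gumbel_hasDerivAt_F c x) hint
    (gumbel_tendsto_F_bot hc) (gumbel_tendsto_F_top c)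
  simpa using this

lemma gumbel_lintegral_f'_Iic {c : ℝ} (hc : 0 < c) (b : ℝ) :
    ∫⁻ t in Iic b, ENNReal.ofReal (c * exp (-t - c * exp (-t)))
      = ENNReal.ofReal (exp (-(c * exp (-b)))) := by
  rw [← ofReal_integral_eq_lintegral_ofReal (gumbel_integrableOn_f' hc _)
    (Filter.Eventually.of_forall fun t => by positivity), gumbel_integral_f'_Iic hc b]

lemma gumbel_lintegral_f'_univ {c : ℝ} (hc : 0 < c) :
    ∫⁻ t, ENNReal.ofReal (c * exp (-t - c * exp (-t))) = 1 := by
  rw [← ofReal_integral_eq_lintegral_ofReal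
    (by rw [← integrableOn_univ]; exact gumbel_integrableOn_f' hc univ)
    (Filter.Eventually.of_forall fun t => by positivity), gumbel_integral_f'_univ hc]
  simp

noncomputable def μG : Measure ℝ :=
  volume.withDensity (fun t => ENNReal.ofReal (exp (-t - exp (-t))))

lemma μG_Iic (b : ℝ) : μG (Iic b) = ENNReal.ofReal (exp (-exp (-b))) := by
  rw [μG, withDensity_apply _ measurableSet_Iic]
  have := gumbel_lintegral_f'_Iic one_pos b
  simpa using this

lemma μG_univ : μG univ = 1 := by
  rw [μG, withDensity_apply _ MeasurableSet.univ, Measure.restrict_univ]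
  have := gumbel_lintegral_f'_univ one_pos
  simpa using this

instance : IsProbabilityMeasure μG := ⟨μG_univ⟩

lemma μG_singleton (b : ℝ) : μG {b} = 0 := by
  rw [μG, withDensity_apply _ (measurableSet_singleton b)]
  rw [setLIntegral_measure_zero _ _ (Real.volume_singleton)]

lemma μG_Iio (b : ℝ) : μG (Iio b) = ENNReal.ofReal (exp (-exp (-b))) := by
  have h : μG (Iic b) = μG (Iio b) + μG {b} := by
    rw [← measure_union (by simp) (measurableSet_singleton b), Set.Iio_union_right]
  rw [μG_singleton, add_zero] at h
  rw [← h, μG_Iic]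

lemma pi_measure_max {m : ℕ} (α : Fin (m+1) → ℝ) (hα : ∀ i, 0 < α i) (j : Fin (m+1)) :
    Measure.pi (fun _ : Fin (m+1) => μG)
      {x | ∀ i, i ≠ j → Real.log (α i) + x i < Real.log (α j) + x j}
      = ENNReal.ofReal (α j / ∑ i, α i) := by
  set c₀ : ℝ := ∑ i : Fin m, α (j.succAbove i) / α j with hc₀
  have hc₀nn : 0 ≤ c₀ := Finset.sum_nonneg fun i _ => div_nonneg (hα _).le (hα _).le
  set S' : Set (ℝ × (Fin m → ℝ)) :=
    {p | ∀ i : Fin m, Real.log (α (j.succAbove i)) + p.2 i < Real.log (α j) + p.1} with hS'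
  have hS'meas : MeasurableSet S' := by
    rw [hS', setOf_forall]
    exact MeasurableSet.iInter fun i => measurableSet_lt (by fun_prop) (by fun_prop)
  have hpre : {x : Fin (m+1) → ℝ | ∀ i, i ≠ j → Real.log (α i) + x i < Real.log (α j) + x j}
      = (MeasurableEquiv.piFinSuccAbove (fun _ => ℝ) j) ⁻¹' S' := by
    ext x
    simp only [mem_preimage, MeasurableEquiv.piFinSuccAbove_apply, hS', mem_setOf_eq]
    constructor
    · intro h i
      exact h (j.succAbove i) (Fin.succAbove_ne j i)
    · intro h i hi
      obtain ⟨i', rfl⟩ := Fin.exists_succAbove_eq hi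
      exact h i'
  rw [hpre, (measurePreserving_piFinSuccAbove (fun _ => μG) j).measure_preimage_equiv]
  rw [Measure.prod_apply hS'meas]
  have hinner : ∀ t : ℝ, (Measure.pi fun _ : Fin m => μG) (Prod.mk t ⁻¹' S')
      = ENNReal.ofReal (exp (-(c₀ * exp (-t)))) := by
    intro t
    have h1 : Prod.mk t ⁻¹' S'
        = univ.pi fun i : Fin m => Iio (Real.log (α j) + t - Real.log (α (j.succAbove i))) := by
      ext y
      simp only [mem_preimage, hS', mem_setOf_eq, Set.mem_univ_pi, mem_Iio]
      constructor <;> intro h i <;> linarith [h i]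
    rw [h1, Measure.pi_pi]
    have h2 : ∀ i : Fin m,
        μG (Iio (Real.log (α j) + t - Real.log (α (j.succAbove i))))
        = ENNReal.ofReal (exp (-(α (j.succAbove i) / α j * exp (-t)))) := by
      intro i
      rw [μG_Iio]
      congr 2
      rw [show -(Real.log (α j) + t - Real.log (α (j.succAbove i)))
          = Real.log (α (j.succAbove i) / α j) + (-t) by
        rw [Real.log_div (ne_of_gt (hα _)) (ne_of_gt (hα _))]; ring]
      rw [Real.exp_add, Real.exp_log (div_pos (hα _) (hα _))]
    rw [Finset.prod_congr rfl fun i _ => h2 i,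
      ← ENNReal.ofReal_prod_of_nonneg (fun i _ => (Real.exp_pos _).le),
      ← Real.exp_sum]
    congr 2
    rw [hc₀, Finset.sum_mul, ← Finset.sum_neg_distrib]
  rw [lintegral_congr hinner]
  rw [μG, lintegral_withDensity_eq_lintegral_mul _
    (by fun_prop) (by fun_prop)]
  have hmul : ∀ t : ℝ, ((fun t => ENNReal.ofReal (exp (-t - exp (-t)))) * fun t =>
      ENNReal.ofReal (exp (-(c₀ * exp (-t))))) t
      = ENNReal.ofReal ((c₀+1)⁻¹ * ((c₀+1) * exp (-t - (c₀+1) * exp (-t)))) := by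
    intro t
    simp only [Pi.mul_apply]
    rw [← ENNReal.ofReal_mul (Real.exp_pos _).le]
    congr 1
    rw [inv_mul_cancel_left₀ (by linarith : (0:ℝ) < c₀ + 1).ne', ← Real.exp_add]
    ring_nf
  rw [lintegral_congr hmul]
  simp_rw [ENNReal.ofReal_mul (by positivity : (0:ℝ) ≤ (c₀+1)⁻¹)]
  rw [lintegral_const_mul _ (by fun_prop),
    gumbel_lintegral_f'_univ (by linarith : (0:ℝ) < c₀ + 1), mul_one]
  congr 1
  have hαj := hα j
  have hsum : ∑ i, α i = α j + ∑ i : Fin m, α (j.succAbove i) := Fin.sum_univ_succAbove α j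
  have h : c₀ + 1 = (∑ i, α i) / α j := by
    rw [hc₀, hsum, ← Finset.sum_div]
    field_simp
    ring
  rw [h, inv_div]

lemma tendsto_softmax {n : ℕ} (a : Fin n → ℝ) (j k : Fin n)
    (hj : ∀ i, i ≠ j → a i < a j) :
    Tendsto (fun l => exp (a k / l) / ∑ i, exp (a i / l)) (𝓝[>] (0:ℝ))
      (𝓝 (if k = j then 1 else 0)) := by
  have hident : ∀ l : ℝ, exp (a k / l) / ∑ i, exp (a i / l)
      = exp ((a k - a j) / l) / ∑ i, exp ((a i - a j) / l) := by
    intro l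
    have h : ∀ i : Fin n, exp (a i / l) = exp (a j / l) * exp ((a i - a j) / l) := by
      intro i
      rw [← Real.exp_add, ← add_div]
      ring_nf
    rw [h k, Finset.sum_congr rfl (fun i _ => h i), ← Finset.mul_sum,
      mul_div_mul_left _ _ (Real.exp_ne_zero _)]
  have hterm : ∀ i : Fin n, Tendsto (fun l => exp ((a i - a j) / l)) (𝓝[>] (0:ℝ))
      (𝓝 (if i = j then 1 else 0)) := by
    intro i
    by_cases hij : i = j
    · simp [hij]
    · simp only [hij, if_neg, if_false]
      apply Real.tendsto_exp_atBot.comp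
      have h1 : Tendsto (fun l : ℝ => (a i - a j) * l⁻¹) (𝓝[>] (0:ℝ)) atBot :=
        tendsto_inv_nhdsGT_zero.const_mul_atTop_of_neg (by linarith [hj i hij])
      exact h1.congr fun l => (div_eq_mul_inv _ _).symm
  have hsum : Tendsto (fun l => ∑ i, exp ((a i - a j) / l)) (𝓝[>] (0:ℝ)) (𝓝 1) := by
    have := tendsto_finset_sum Finset.univ (fun i (_ : i ∈ Finset.univ) => hterm i)
    simpa [Finset.sum_ite_eq'] using this
  have := (hterm k).div hsum one_ne_zero
  simp only [div_one] at this
  exact this.congr (fun l => (hident l).symm)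

end GumbelAux

/-- Zero temperature limit of the Concrete distribution. -/
theorem concrete_zero_temperature
    {Ω : Type*} [MeasurableSpace Ω] (P : Measure Ω) [IsProbabilityMeasure P]
    (n : ℕ) (α : Fin n → ℝ) (hα : ∀ i, 0 < α i)
    (G : Fin n → Ω → ℝ) (hG : ∀ i, Measurable (G i))
    (hIndep : iIndepFun G P)
    (hGumbel : ∀ i, ∀ g : ℝ,
      P {ω | G i ω ≤ g} = ENNReal.ofReal (Real.exp (-Real.exp (-g))))
    (X : ℝ → Fin n → Ω → ℝ)
    (hX : ∀ l k ω, X l k ω = Real.exp ((Real.log (α k) + G k ω) / l)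
        / ∑ i, Real.exp ((Real.log (α i) + G i ω) / l)) :
    ∀ k : Fin n,
      P {ω | Tendsto (fun l => X l k ω) (nhdsWithin 0 (Set.Ioi 0)) (nhds 1)}
        = ENNReal.ofReal (α k / ∑ i, α i) := by
  rcases n with _ | m
  · intro k; exact k.elim0
  intro k
  have hS : 0 < ∑ i, α i := Finset.sum_pos (fun i _ => hα i) ⟨k, Finset.mem_univ k⟩
  have hlaw : ∀ i, P.map (G i) = μG := by
    intro i
    haveI : IsProbabilityMeasure (P.map (G i)) :=
      Measure.isProbabilityMeasure_map (hG i).aemeasurable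
    refine Measure.ext_of_Iic _ _ (fun a => ?_)
    rw [Measure.map_apply (hG i) measurableSet_Iic, μG_Iic]
    exact hGumbel i a
  set T : Ω → (Fin (m+1) → ℝ) := fun ω i => G i ω with hTdef
  have hT : Measurable T := measurable_pi_lambda _ hG
  have hmap : Measure.pi (fun _ : Fin (m+1) => μG) = P.map T := by
    refine Measure.pi_eq fun s hs => ?_
    rw [Measure.map_apply hT (MeasurableSet.univ_pi hs)]
    have hpre : T ⁻¹' (univ.pi s) = ⋂ i ∈ Finset.univ, G i ⁻¹' s i := by
      ext ω; simp [hTdef, Set.mem_univ_pi]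
    rw [hpre, hIndep.measure_inter_preimage_eq_mul Finset.univ (fun i _ => hs i)]
    exact Finset.prod_congr rfl fun i _ => by
      rw [← Measure.map_apply (hG i) (hs i), hlaw i]
  set E : Fin (m+1) → Set Ω :=
    fun j => {ω | ∀ i, i ≠ j → Real.log (α i) + G i ω < Real.log (α j) + G j ω} with hE
  have hEmeas : ∀ j, MeasurableSet (E j) := by
    intro j
    have h : E j = ⋂ i, ⋂ (_ : i ≠ j),
        {ω | Real.log (α i) + G i ω < Real.log (α j) + G j ω} := by
      ext ω; simp [hE]
    rw [h]
    exact MeasurableSet.iInter fun i => MeasurableSet.iInter fun _ =>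
      measurableSet_lt (by fun_prop) (by fun_prop)
  have hPE : ∀ j, P (E j) = ENNReal.ofReal (α j / ∑ i, α i) := by
    intro j
    have hSmeas : MeasurableSet
        {x : Fin (m+1) → ℝ | ∀ i, i ≠ j → Real.log (α i) + x i < Real.log (α j) + x j} := by
      have h : {x : Fin (m+1) → ℝ | ∀ i, i ≠ j → Real.log (α i) + x i < Real.log (α j) + x j}
          = ⋂ i, ⋂ (_ : i ≠ j), {x : Fin (m+1) → ℝ |
              Real.log (α i) + x i < Real.log (α j) + x j} := by
        ext x; simp
      rw [h]
      exact MeasurableSet.iInter fun i => MeasurableSet.iInter fun _ =>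
        measurableSet_lt (by fun_prop) (by fun_prop)
    have hpre : E j = T ⁻¹'
        {x : Fin (m+1) → ℝ | ∀ i, i ≠ j → Real.log (α i) + x i < Real.log (α j) + x j} := rfl
    rw [hpre, ← Measure.map_apply hT hSmeas, ← hmap, pi_measure_max α hα j]
  have hdisj : Pairwise (Function.onFun Disjoint E) := by
    intro i j hij
    rw [Function.onFun, Set.disjoint_left]
    intro ω hi hj
    exact lt_asymm (hi j (Ne.symm hij)) (hj i hij)
  have hPU : P (⋃ j, E j) = 1 := by
    rw [measure_iUnion hdisj hEmeas, tsum_fintype]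
    simp_rw [hPE]
    rw [← ENNReal.ofReal_sum_of_nonneg (fun i _ => div_nonneg (hα i).le hS.le),
      ← Finset.sum_div, div_self hS.ne']
    simp
  have hN : P ((⋃ j, E j)ᶜ) = 0 := by
    rw [measure_compl (MeasurableSet.iUnion hEmeas) (measure_ne_top _ _), hPU, measure_univ]
    simp
  have hLim : ∀ j, ∀ ω ∈ E j, ∀ k' : Fin (m+1),
      Tendsto (fun l => X l k' ω) (𝓝[>] (0:ℝ)) (𝓝 (if k' = j then 1 else 0)) := by
    intro j ω hω k'
    have := tendsto_softmax (fun i => Real.log (α i) + G i ω) j k' (fun i hi => hω i hi)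
    refine this.congr fun l => ?_
    rw [hX]
  have h1 : E k ⊆ {ω | Tendsto (fun l => X l k ω) (𝓝[>] (0:ℝ)) (𝓝 1)} := by
    intro ω hω
    have := hLim k ω hω k
    simpa using this
  have h2 : {ω | Tendsto (fun l => X l k ω) (𝓝[>] (0:ℝ)) (𝓝 1)}
      ⊆ E k ∪ (⋃ j, E j)ᶜ := by
    intro ω hω
    by_cases hmem : ω ∈ ⋃ j, E j
    · obtain ⟨j, hj⟩ := mem_iUnion.mp hmem
      left
      rcases eq_or_ne k j with rfl | hkj
      · exact hj
      · exfalso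
        have h0 := hLim j ω hj k
        rw [if_neg hkj] at h0
        exact one_ne_zero (tendsto_nhds_unique hω h0)
    · right; exact hmem
  refine le_antisymm ?_ ?_
  · calc P {ω | Tendsto (fun l => X l k ω) (𝓝[>] (0:ℝ)) (𝓝 1)}
        ≤ P (E k ∪ (⋃ j, E j)ᶜ) := measure_mono h2
      _ ≤ P (E k) + P ((⋃ j, E j)ᶜ) := measure_union_le _ _
      _ = ENNReal.ofReal (α k / ∑ i, α i) := by rw [hN, add_zero, hPE]
  · rw [← hPE k]
    exact measure_mono h1
end

section
/- (Convexity at low temperature) If λ ≤ 1/(n-1), then the Concrete density p_{α,λ}(x) = (n-1)! λ^{n-1} ∏ₖ (αₖ xₖ^{-λ-1} / ∑ᵢ αᵢ xᵢ^{-λ}) is log-convex as a function of x on the open simplex Δ^{n-1}, for every α ∈ (0,∞)ⁿ. -/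
open MeasureTheory Real

lemma amgm_slack {n : ℕ} (w u : Fin n → ℝ) (hw : ∀ k, 0 ≤ w k) (hs : ∑ k, w k ≤ 1)
    (hu : ∀ k, 0 < u k) :
    ∏ k, u k ^ w k ≤ (1 - ∑ k, w k) + ∑ k, w k * u k := by
  have h := Real.geom_mean_le_arith_mean_weighted (Finset.univ : Finset (Option (Fin n)))
    (fun o => o.elim (1 - ∑ k, w k) w) (fun o => o.elim 1 u)
    (by rintro (_|k) _ <;> simp [hw, sub_nonneg.2 hs])
    (by simp [Fintype.sum_option])
    (by rintro (_|k) _ <;> simp [le_of_lt (hu _)])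
  simpa [Fintype.sum_option, Fintype.prod_option] using h

lemma concaveOn_prod_rpow {n : ℕ} {S : Set (Fin n → ℝ)} (hS : Convex ℝ S)
    (hpos : ∀ x ∈ S, ∀ k, 0 < x k) (w : Fin n → ℝ) (hw : ∀ k, 0 ≤ w k)
    (hs : ∑ k, w k ≤ 1) :
    ConcaveOn ℝ S (fun x => ∏ k, x k ^ w k) := by
  refine ⟨hS, fun x hx y hy a b ha hb hab => ?_⟩
  by_cases ha0 : a = 0
  · simp [ha0, (by linarith : b = 1)]
  by_cases hb0 : b = 0
  · simp [hb0, (by linarith : a = 1)]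
  have ha' : 0 < a := lt_of_le_of_ne ha (Ne.symm ha0)
  have hb' : 0 < b := lt_of_le_of_ne hb (Ne.symm hb0)
  set z := a • x + b • y with hz
  have hzS : z ∈ S := hS hx hy ha hb hab
  have hzpos : ∀ k, 0 < z k := hpos z hzS
  have hxpos := hpos x hx
  have hypos := hpos y hy
  have hP : 0 < ∏ k, z k ^ w k := Finset.prod_pos fun k _ => rpow_pos_of_pos (hzpos k) _
  -- key bounds
  have key : ∀ (u : Fin n → ℝ), (∀ k, 0 < u k) →
      ∏ k, u k ^ w k ≤ (∏ k, z k ^ w k) * ((1 - ∑ k, w k) + ∑ k, w k * (u k / z k)) := by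
    intro u hu
    have h1 := amgm_slack w (fun k => u k / z k) hw hs (fun k => div_pos (hu k) (hzpos k))
    have h2 : ∏ k, (u k / z k) ^ w k = (∏ k, u k ^ w k) / ∏ k, z k ^ w k := by
      rw [← Finset.prod_div_distrib]
      exact Finset.prod_congr rfl fun k _ =>
        Real.div_rpow (le_of_lt (hu k)) (le_of_lt (hzpos k)) (w k)
    rw [h2, div_le_iff₀ hP] at h1
    linarith [h1]
  have kx := key x hxpos
  have ky := key y hypos
  have hcomb : a * ((1 - ∑ k, w k) + ∑ k, w k * (x k / z k))
      + b * ((1 - ∑ k, w k) + ∑ k, w k * (y k / z k)) = 1 := by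
    have : ∀ k, a * (w k * (x k / z k)) + b * (w k * (y k / z k)) = w k := by
      intro k
      have hne : z k ≠ 0 := (hzpos k).ne'
      have hzk : z k = a * x k + b * y k := by simp [hz]
      have : a * (w k * (x k / z k)) + b * (w k * (y k / z k))
          = w k * ((a * x k + b * y k) / z k) := by ring
      rw [this, ← hzk, div_self hne, mul_one]
    calc a * ((1 - ∑ k, w k) + ∑ k, w k * (x k / z k))
        + b * ((1 - ∑ k, w k) + ∑ k, w k * (y k / z k))
        = (a + b) * (1 - ∑ k, w k) + ∑ k, (a * (w k * (x k / z k)) + b * (w k * (y k / z k))) := by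
          rw [Finset.sum_add_distrib, ← Finset.mul_sum, ← Finset.mul_sum]; ring
      _ = 1 := by rw [hab, Finset.sum_congr rfl (fun k _ => this k)]; ring
  calc a • (∏ k, x k ^ w k) + b • (∏ k, y k ^ w k)
      ≤ a * ((∏ k, z k ^ w k) * ((1 - ∑ k, w k) + ∑ k, w k * (x k / z k)))
        + b * ((∏ k, z k ^ w k) * ((1 - ∑ k, w k) + ∑ k, w k * (y k / z k))) := by
        simp only [smul_eq_mul]
        gcongr
    _ = (∏ k, z k ^ w k) * (a * ((1 - ∑ k, w k) + ∑ k, w k * (x k / z k))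
        + b * ((1 - ∑ k, w k) + ∑ k, w k * (y k / z k))) := by ring
    _ = ∏ k, z k ^ w k := by rw [hcomb, mul_one]

section helpers

variable {n : ℕ} {S : Set (Fin n → ℝ)}

lemma concaveOn_finset_sum {ι : Type*} (t : Finset ι) (f : ι → (Fin n → ℝ) → ℝ)
    (hS : Convex ℝ S) (h : ∀ i ∈ t, ConcaveOn ℝ S (f i)) :
    ConcaveOn ℝ S (fun x => ∑ i ∈ t, f i x) := by
  classical
  induction t using Finset.induction_on with
  | empty => simpa using concaveOn_const 0 hS
  | insert a s hnotmem ih =>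
      simp only [Finset.sum_insert hnotmem]
      exact (h a (Finset.mem_insert_self a s)).add
        (ih (fun i hi => h i (Finset.mem_insert_of_mem hi)))

lemma convexOn_neg_log_comp (g : (Fin n → ℝ) → ℝ) (hg : ConcaveOn ℝ S g)
    (hpos : ∀ x ∈ S, 0 < g x) : ConvexOn ℝ S (fun x => -Real.log (g x)) := by
  refine ⟨hg.1, fun x hx y hy a b ha hb hab => ?_⟩
  have hxg := hpos x hx
  have hyg := hpos y hy
  have h1 : a * g x + b * g y ≤ g (a • x + b • y) := hg.2 hx hy ha hb hab
  have h2 : Real.log (a * g x + b * g y) ≤ Real.log (g (a • x + b • y)) := by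
    apply Real.log_le_log _ h1
    rcases eq_or_lt_of_le ha with h|h
    · simp [← h] at hab ⊢; nlinarith
    · nlinarith
  have h3 : a * Real.log (g x) + b * Real.log (g y) ≤ Real.log (a * g x + b * g y) := by
    rcases eq_or_lt_of_le ha with h|h
    · have hb1 : b = 1 := by linarith
      simp [← h, hb1]
    rcases eq_or_lt_of_le hb with h'|h'
    · have ha1 : a = 1 := by linarith
      simp [← h', ha1]
    · exact (strictConcaveOn_log_Ioi.concaveOn.2 (Set.mem_Ioi.2 hxg)
        (Set.mem_Ioi.2 hyg) ha hb hab)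
  simp only [smul_eq_mul]
  linarith

end helpers

section helpers

variable {n : ℕ} {S : Set (Fin n → ℝ)}

lemma convexOn_finset_sum' {ι : Type*} (t : Finset ι) (f : ι → (Fin n → ℝ) → ℝ)
    (hS : Convex ℝ S) (h : ∀ i ∈ t, ConvexOn ℝ S (f i)) :
    ConvexOn ℝ S (fun x => ∑ i ∈ t, f i x) := by
  classical
  induction t using Finset.induction_on with
  | empty => simpa using convexOn_const 0 hS
  | insert a s hnotmem ih =>
      simp only [Finset.sum_insert hnotmem]
      exact (h a (Finset.mem_insert_self a s)).add
        (ih (fun i hi => h i (Finset.mem_insert_of_mem hi)))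

end helpers

/-- At temperatures `λ ≤ 1/(n-1)` the Concrete density is log-convex on the open simplex. -/
theorem concrete_log_convex
    (n : ℕ) (hn : 2 ≤ n) (α : Fin n → ℝ) (hα : ∀ i, 0 < α i)
    (l : ℝ) (hl : 0 < l) (hln : l ≤ 1 / ((n : ℝ) - 1)) :
    ConvexOn ℝ {x : Fin n → ℝ | (∀ k, x k ∈ Set.Ioo (0 : ℝ) 1) ∧ ∑ k, x k = 1}
      (fun x => Real.log
        (((n - 1).factorial : ℝ) * l ^ (n - 1) *
          ∏ k, (α k * x k ^ (-l - 1) / ∑ i, α i * x i ^ (-l)))) := by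
  set S : Set (Fin n → ℝ) := {x : Fin n → ℝ | (∀ k, x k ∈ Set.Ioo (0 : ℝ) 1) ∧ ∑ k, x k = 1}
    with hSdef
  have hn1 : (0:ℝ) < (n:ℝ) - 1 := by
    have : (2:ℝ) ≤ (n:ℝ) := by exact_mod_cast hn
    linarith
  have hc : 0 ≤ 1 - ((n:ℝ) - 1) * l := by
    have h1 : l * ((n:ℝ) - 1) ≤ 1 := by
      rw [← le_div_iff₀ hn1]; exact hln
    nlinarith
  have hSconv : Convex ℝ S := by
    intro x hx y hy a b ha hb hab
    refine ⟨fun k => ?_, ?_⟩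
    · have h1 := hx.1 k; have h2 := hy.1 k
      simp only [Pi.add_apply, Pi.smul_apply, smul_eq_mul]
      rcases eq_or_lt_of_le ha with h | h
      · have hb1 : b = 1 := by linarith
        simpa [← h, hb1] using h2
      rcases eq_or_lt_of_le hb with h' | h'
      · have ha1 : a = 1 := by linarith
        simpa [← h', ha1] using h1
      constructor
      · have := mul_pos h h1.1
        have := mul_pos h' h2.1
        linarith
      · have := mul_lt_mul_of_pos_left h1.2 h
        have := mul_lt_mul_of_pos_left h2.2 h'
        linarith
    · simp only [Pi.add_apply, Pi.smul_apply, smul_eq_mul]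
      rw [Finset.sum_add_distrib, ← Finset.mul_sum, ← Finset.mul_sum, hx.2, hy.2]
      simpa using hab
  haveI : Nonempty (Fin n) := ⟨⟨0, by omega⟩⟩
  have hpos : ∀ x ∈ S, ∀ k, 0 < x k := fun x hx k => (hx.1 k).1
  set w : Fin n → Fin n → ℝ := fun i k => if k = i then 0 else l with hwdef
  have hwsum : ∀ i, ∑ k, w i k = ((n:ℝ) - 1) * l := by
    intro i
    have h1 : ∀ k, w i k = l - (if k = i then l else 0) := by
      intro k; simp only [hwdef]; split <;> ring
    rw [Finset.sum_congr rfl fun k _ => h1 k, Finset.sum_sub_distrib,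
      Finset.sum_const, Finset.card_univ, Fintype.card_fin,
      Finset.sum_ite_eq' Finset.univ i fun _ => l]
    simp [nsmul_eq_mul]
    ring
  set G : (Fin n → ℝ) → ℝ := fun x => ∑ i, α i * ∏ k, x k ^ w i k with hGdef
  have hGpos : ∀ x ∈ S, 0 < G x := by
    intro x hx
    apply Finset.sum_pos (fun i _ => ?_) Finset.univ_nonempty
    exact mul_pos (hα i) (Finset.prod_pos fun k _ => rpow_pos_of_pos (hpos x hx k) _)
  have hGconc : ConcaveOn ℝ S G := by
    apply concaveOn_finset_sum Finset.univ (fun i x => α i * ∏ k, x k ^ w i k) hSconv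
    intro i _
    have h := (concaveOn_prod_rpow hSconv hpos (w i)
      (fun k => by
        have hh : w i k = if k = i then 0 else l := rfl
        rw [hh]; split <;> linarith)
      (by rw [hwsum i]; nlinarith)).smul (hα i).le
    simpa [smul_eq_mul] using h
  have hSxpos : ∀ x ∈ S, (0:ℝ) < ∑ i, α i * x i ^ (-l) := by
    intro x hx
    apply Finset.sum_pos (fun i _ => ?_) Finset.univ_nonempty
    exact mul_pos (hα i) (rpow_pos_of_pos (hpos x hx i) _)
  have hGeq : ∀ x ∈ S, G x = (∑ i, α i * x i ^ (-l)) * ∏ k, x k ^ l := by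
    intro x hx
    rw [Finset.sum_mul]
    refine Finset.sum_congr rfl fun i _ => ?_
    have hkey : ∀ k, x k ^ w i k = x k ^ l * (if k = i then (x i ^ l)⁻¹ else 1) := by
      intro k
      by_cases h : k = i
      · subst h
        simp [hwdef, (rpow_pos_of_pos (hpos x hx k) l).ne']
      · simp [hwdef, h]
    rw [Finset.prod_congr rfl fun k _ => hkey k, Finset.prod_mul_distrib,
      Finset.prod_ite_eq' Finset.univ i fun _ => (x i ^ l)⁻¹]
    have hinv : (x i ^ l)⁻¹ = x i ^ (-l) :=
      (Real.rpow_neg (hpos x hx i).le l).symm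
    simp only [Finset.mem_univ, if_pos]
    rw [hinv]
    ring
  set C0 : ℝ := Real.log ((n-1).factorial : ℝ) + ((n:ℝ)-1) * Real.log l
    + ∑ k, Real.log (α k) with hC0def
  have hlogG : ∀ x ∈ S, Real.log (G x)
      = Real.log (∑ i, α i * x i ^ (-l)) + l * ∑ k, Real.log (x k) := by
    intro x hx
    have hprodpos : (0:ℝ) < ∏ k, x k ^ l :=
      Finset.prod_pos fun k _ => rpow_pos_of_pos (hpos x hx k) _
    rw [hGeq x hx, Real.log_mul (hSxpos x hx).ne' hprodpos.ne',
      Real.log_prod (fun k _ => (rpow_pos_of_pos (hpos x hx k) l).ne')]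
    congr 1
    rw [Finset.mul_sum]
    exact Finset.sum_congr rfl fun k _ => Real.log_rpow (hpos x hx k) l
  have heq : ∀ x ∈ S,
      Real.log (((n - 1).factorial : ℝ) * l ^ (n - 1) *
          ∏ k, (α k * x k ^ (-l - 1) / ∑ i, α i * x i ^ (-l)))
      = C0 + (1 - ((n:ℝ)-1)*l) * (∑ k, -Real.log (x k))
          + (n:ℝ) * (-Real.log (G x)) := by
    intro x hx
    have hfac : ((n-1).factorial : ℝ) ≠ 0 := by
      exact_mod_cast (Nat.factorial_pos _).ne'
    have hlp : l ^ (n-1) ≠ 0 := by positivity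
    have htpos : ∀ k, (0:ℝ) < α k * x k ^ (-l - 1) / ∑ i, α i * x i ^ (-l) :=
      fun k => div_pos (mul_pos (hα k) (rpow_pos_of_pos (hpos x hx k) _)) (hSxpos x hx)
    rw [Real.log_mul (mul_ne_zero hfac hlp)
        (Finset.prod_ne_zero_iff.2 fun k _ => (htpos k).ne'),
      Real.log_mul hfac hlp, Real.log_prod (fun k _ => (htpos k).ne')]
    have hterm2 : ∀ k, Real.log (α k * x k ^ (-l - 1) / ∑ i, α i * x i ^ (-l))
        = Real.log (α k) + (-l-1) * Real.log (x k)
          - Real.log (∑ i, α i * x i ^ (-l)) := by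
      intro k
      rw [Real.log_div (mul_ne_zero (hα k).ne'
          (rpow_pos_of_pos (hpos x hx k) _).ne') (hSxpos x hx).ne',
        Real.log_mul (hα k).ne' (rpow_pos_of_pos (hpos x hx k) _).ne',
        Real.log_rpow (hpos x hx k)]
    rw [Finset.sum_congr rfl fun k _ => hterm2 k]
    rw [Finset.sum_sub_distrib, Finset.sum_add_distrib, Finset.sum_const,
      Finset.card_univ, Fintype.card_fin]
    have hlpow : Real.log (l ^ (n-1)) = ((n:ℝ)-1) * Real.log l := by
      rw [Real.log_pow]
      have h1 : (1:ℕ) ≤ n := by omega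
      congr 1
      push_cast [Nat.cast_sub h1]
      ring
    have hlogT : Real.log (∑ i, α i * x i ^ (-l))
        = Real.log (G x) - l * ∑ k, Real.log (x k) := by
      linarith [hlogG x hx]
    rw [hlpow, hlogT, ← Finset.mul_sum, Finset.sum_neg_distrib, hC0def]
    ring
  have hone : ConvexOn ℝ S (fun x => ∑ k, -Real.log (x k)) := by
    apply convexOn_finset_sum' Finset.univ (fun k x => -Real.log (x k)) hSconv
    intro k _
    apply convexOn_neg_log_comp (fun x => x k) ?_ (fun x hx => hpos x hx k)
    exact ⟨hSconv, fun x hx y hy a b ha hb hab => le_of_eq (by simp)⟩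
  have htwo : ConvexOn ℝ S (fun x => -Real.log (G x)) :=
    convexOn_neg_log_comp G hGconc hGpos
  have hF : ConvexOn ℝ S (fun x => C0 + (1 - ((n:ℝ)-1)*l) * (∑ k, -Real.log (x k))
      + (n:ℝ) * (-Real.log (G x))) := by
    have h1 := hone.smul hc
    have h2 := htwo.smul (n.cast_nonneg : (0:ℝ) ≤ (n:ℝ))
    have h3 := ((convexOn_const C0 hSconv).add h1).add h2
    simpa [smul_eq_mul, Pi.add_def] using h3
  refine ⟨hSconv, fun x hx y hy a b ha hb hab => ?_⟩
  have hz : a • x + b • y ∈ S := hSconv hx hy ha hb hab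
  simp only [smul_eq_mul]
  rw [heq _ hz, heq _ hx, heq _ hy]
  have h4 := hF.2 hx hy ha hb hab
  simpa [smul_eq_mul] using h4
end

section
/- (Binary Concrete reparameterization) Let α, λ > 0 and L a standard Logistic random variable. Then X = σ((log α + L)/λ), where σ(t) = 1/(1+exp(-t)), takes values in (0,1) and has density p(x) = λ α x^{-λ-1}(1-x)^{-λ-1} / (α x^{-λ} + (1-x)^{-λ})². -/
open MeasureTheory Real

open Set Filter

noncomputable def BCpdf (α l : ℝ) (x : ℝ) : ℝ :=
  l * α * x ^ (-l - 1) * (1 - x) ^ (-l - 1) / (α * x ^ (-l) + (1 - x) ^ (-l)) ^ 2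

noncomputable def BCcdf (α l : ℝ) (x : ℝ) : ℝ :=
  (1 - x) ^ (-l) / (α * x ^ (-l) + (1 - x) ^ (-l))

lemma BC_den_pos {α l : ℝ} (hα : 0 < α) {x : ℝ} (hx : x ∈ Ioo (0:ℝ) 1) :
    0 < α * x ^ (-l) + (1 - x) ^ (-l) := by
  have h1 : (0:ℝ) < 1 - x := by linarith [hx.2]
  have hx0 : (0:ℝ) < x := hx.1
  have := Real.rpow_pos_of_pos hx0 (-l)
  have := Real.rpow_pos_of_pos h1 (-l)
  positivity

lemma BC_hasDerivAt {α l : ℝ} (hα : 0 < α) (hl : 0 < l) {x : ℝ} (hx : x ∈ Ioo (0:ℝ) 1) :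
    HasDerivAt (BCcdf α l) (BCpdf α l x) x := by
  have hx0 : (0:ℝ) < x := hx.1
  have h1x : (0:ℝ) < 1 - x := by linarith [hx.2]
  have hden := BC_den_pos (l := l) hα hx
  -- derivative of v = (1-x)^(-l)
  have hv : HasDerivAt (fun y : ℝ => (1 - y) ^ (-l)) ((-1) * (-l) * (1 - x) ^ (-l - 1)) x := by
    have h' : HasDerivAt (fun y : ℝ => 1 - y) (-1) x := by
      simpa using (hasDerivAt_id x).const_sub 1
    exact h'.rpow_const (Or.inl h1x.ne')
  have hu : HasDerivAt (fun y : ℝ => α * y ^ (-l)) (α * (-l * x ^ (-l - 1))) x := by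
    exact (Real.hasDerivAt_rpow_const (Or.inl hx0.ne')).const_mul α
  have hsum : HasDerivAt (fun y : ℝ => α * y ^ (-l) + (1 - y) ^ (-l))
      (α * (-l * x ^ (-l - 1)) + (-1) * (-l) * (1 - x) ^ (-l - 1)) x := hu.add hv
  have h := hv.div hsum hden.ne'
  convert h using 1
  · rfl
  · rfl
  · rfl
  have e1 : x ^ (-l) = x * x ^ (-l - 1) := by
    rw [← Real.rpow_one_add' hx0.le (by simp only [neg_add_cancel_comm, add_sub_cancel]; simpa using hl.ne')]
    ring_nf
  have e2 : (1 - x) ^ (-l) = (1 - x) * (1 - x) ^ (-l - 1) := by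
    rw [← Real.rpow_one_add' h1x.le (by simp only [neg_add_cancel_comm, add_sub_cancel]; simpa using hl.ne')]
    ring_nf
  rw [BCpdf]
  rw [div_eq_div_iff (by positivity) (by positivity)]
  rw [e1, e2]
  ring

lemma BCpdf_contOn {α l : ℝ} (hα : 0 < α) : ContinuousOn (BCpdf α l) (Ioo (0:ℝ) 1) := by
  have h1 : ContinuousOn (fun x : ℝ => x ^ (-l - 1)) (Ioo (0:ℝ) 1) :=
    continuousOn_id.rpow_const (fun x hx => Or.inl (ne_of_gt hx.1))
  have h2 : ContinuousOn (fun x : ℝ => (1 - x) ^ (-l - 1)) (Ioo (0:ℝ) 1) :=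
    (continuousOn_const.sub continuousOn_id).rpow_const
      (fun x hx => Or.inl (by have := hx.2; intro h; simp at h; linarith))
  have h3 : ContinuousOn (fun x : ℝ => x ^ (-l)) (Ioo (0:ℝ) 1) :=
    continuousOn_id.rpow_const (fun x hx => Or.inl (ne_of_gt hx.1))
  have h4 : ContinuousOn (fun x : ℝ => (1 - x) ^ (-l)) (Ioo (0:ℝ) 1) :=
    (continuousOn_const.sub continuousOn_id).rpow_const
      (fun x hx => Or.inl (by have := hx.2; intro h; simp at h; linarith))
  exact (((continuousOn_const.mul h1).mul h2).div
    (((continuousOn_const.mul h3).add h4).pow 2)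
    (fun x hx => by have := BC_den_pos (l := l) hα hx; positivity))

lemma BCpdf_nonneg {α l : ℝ} (hα : 0 < α) (hl : 0 < l) {x : ℝ} (hx : x ∈ Ioo (0:ℝ) 1) :
    0 ≤ BCpdf α l x := by
  have hx0 : (0:ℝ) < x := hx.1
  have h1x : (0:ℝ) < 1 - x := by linarith [hx.2]
  have := BC_den_pos (l := l) hα hx
  rw [BCpdf]
  positivity

lemma BC_integral {α l : ℝ} (hα : 0 < α) (hl : 0 < l) {a b : ℝ}
    (ha : 0 < a) (hab : a ≤ b) (hb : b < 1) :
    ∫ x in a..b, BCpdf α l x = BCcdf α l b - BCcdf α l a := by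
  have hsub : uIcc a b ⊆ Ioo (0:ℝ) 1 := by
    rw [uIcc_of_le hab]
    exact fun x hx => ⟨lt_of_lt_of_le ha hx.1, lt_of_le_of_lt hx.2 hb⟩
  refine intervalIntegral.integral_eq_sub_of_hasDerivAt
    (fun x hx => BC_hasDerivAt hα hl (hsub hx)) ?_
  exact ((BCpdf_contOn (l := l) hα).mono hsub).intervalIntegrable

lemma BC_key {α l : ℝ} (hα : 0 < α) {t : ℝ} (ht : t ∈ Ioo (0:ℝ) 1) :
    BCcdf α l t = 1 / (1 + α * t ^ (-l) * (1 - t) ^ l) := by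
  have ht0 : (0:ℝ) < t := ht.1
  have h1t : (0:ℝ) < 1 - t := by linarith [ht.2]
  have hd := BC_den_pos (l := l) hα ht
  have hprod : (1 - t) ^ l * (1 - t) ^ (-l) = 1 := by
    rw [← Real.rpow_add h1t]; simp
  have h2 : (0:ℝ) < 1 + α * t ^ (-l) * (1 - t) ^ l := by
    have := Real.rpow_pos_of_pos ht0 (-l)
    have := Real.rpow_pos_of_pos h1t l
    positivity
  rw [BCcdf, div_eq_div_iff hd.ne' h2.ne']
  linear_combination (α * t ^ (-l)) * hprod

lemma BC_tendsto_zero {α l : ℝ} (hα : 0 < α) (hl : 0 < l) :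
    Tendsto (BCcdf α l) (nhdsWithin 0 (Ioi (0:ℝ))) (nhds 0) := by
  have hnum : Tendsto (fun a : ℝ => (1 - a) ^ (-l)) (nhdsWithin 0 (Ioi (0:ℝ))) (nhds 1) := by
    have hc : ContinuousAt (fun a : ℝ => (1 - a) ^ (-l)) 0 := by
      have h1 : ContinuousAt (fun a : ℝ => 1 - a) 0 := (continuous_const.sub continuous_id).continuousAt
      have h2 : ContinuousAt (fun y : ℝ => y ^ (-l)) ((fun a : ℝ => 1 - a) 0) := by
        simp only [sub_zero]
        exact Real.continuousAt_rpow_const 1 (-l) (Or.inl one_ne_zero)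
      exact h2.comp h1
    have := hc.tendsto
    simp only [sub_zero, Real.one_rpow] at this
    exact this.mono_left nhdsWithin_le_nhds
  have hinv : Tendsto (fun a : ℝ => a ^ (-l)) (nhdsWithin 0 (Ioi (0:ℝ))) atTop := by
    have h1 : Tendsto (fun a : ℝ => (a⁻¹) ^ l) (nhdsWithin 0 (Ioi (0:ℝ))) atTop :=
      (tendsto_rpow_atTop hl).comp tendsto_inv_nhdsGT_zero
    refine h1.congr' ?_
    filter_upwards [self_mem_nhdsWithin] with a (ha : 0 < a)
    rw [show a⁻¹ = a ^ (-1:ℝ) from (Real.rpow_neg_one a).symm, ← Real.rpow_mul ha.le]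
    norm_num
  have hden : Tendsto (fun a : ℝ => α * a ^ (-l) + (1 - a) ^ (-l))
      (nhdsWithin 0 (Ioi (0:ℝ))) atTop :=
    (hinv.const_mul_atTop hα).atTop_add hnum
  have := hnum.div_atTop hden
  exact this

lemma BC_tendsto_one {α l : ℝ} (hα : 0 < α) (hl : 0 < l) :
    Tendsto (BCcdf α l) (nhdsWithin 1 (Iio (1:ℝ))) (nhds 1) := by
  have hmem : Ioo (0:ℝ) 1 ∈ nhdsWithin 1 (Iio (1:ℝ)) :=
    Ioo_mem_nhdsLT_of_mem (by constructor <;> norm_num)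
  have h1 : Tendsto (fun t : ℝ => 1 / (1 + α * t ^ (-l) * (1 - t) ^ l))
      (nhdsWithin 1 (Iio (1:ℝ))) (nhds 1) := by
    have ht1 : Tendsto (fun t : ℝ => t ^ (-l)) (nhdsWithin 1 (Iio (1:ℝ))) (nhds 1) := by
      have := (Real.continuousAt_rpow_const 1 (-l) (Or.inl one_ne_zero)).tendsto
      simp only [Real.one_rpow] at this
      exact this.mono_left nhdsWithin_le_nhds
    have ht2 : Tendsto (fun t : ℝ => (1 - t) ^ l) (nhdsWithin 1 (Iio (1:ℝ))) (nhds 0) := by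
      have hc : ContinuousAt (fun y : ℝ => y ^ l) ((fun t : ℝ => 1 - t) 1) := by
        simp only [sub_self]
        exact Real.continuousAt_rpow_const 0 l (Or.inr hl.le)
      have h2 := (hc.comp (continuous_const.sub continuous_id).continuousAt).tendsto
      have h3 : Tendsto (fun t : ℝ => (1 - t) ^ l) (nhds 1) (nhds ((1 - (1:ℝ)) ^ l)) := h2
      rw [sub_self, Real.zero_rpow hl.ne'] at h3
      exact h3.mono_left nhdsWithin_le_nhds
    have hden : Tendsto (fun t : ℝ => 1 + α * t ^ (-l) * (1 - t) ^ l)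
        (nhdsWithin 1 (Iio (1:ℝ))) (nhds 1) := by
      have h4 : Tendsto (fun t : ℝ => 1 + α * t ^ (-l) * (1 - t) ^ l)
          (nhdsWithin 1 (Iio (1:ℝ))) (nhds (1 + α * 1 * 0)) :=
        tendsto_const_nhds.add ((ht1.const_mul α).mul ht2)
      rw [show (1:ℝ) + α * 1 * 0 = 1 by ring] at h4
      exact h4
    have hres : Tendsto (fun t : ℝ => 1 / (1 + α * t ^ (-l) * (1 - t) ^ l))
        (nhdsWithin 1 (Iio (1:ℝ))) (nhds (1 / 1)) := tendsto_const_nhds.div hden one_ne_zero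
    rw [show (1:ℝ) / 1 = 1 by norm_num] at hres
    exact hres
  refine h1.congr' ?_
  filter_upwards [hmem] with t ht
  exact (BC_key hα ht).symm

noncomputable def BCmeasure (α l : ℝ) : Measure ℝ :=
  (volume.restrict (Ioo (0:ℝ) 1)).withDensity (fun x => ENNReal.ofReal (BCpdf α l x))

lemma BCmeasure_apply (α l : ℝ) {A : Set ℝ} (hA : MeasurableSet A) :
    BCmeasure α l A = ∫⁻ x in A ∩ Ioo (0:ℝ) 1, ENNReal.ofReal (BCpdf α l x) := by
  rw [BCmeasure, withDensity_apply _ hA, Measure.restrict_restrict hA]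

lemma BCmeasure_Ioc {α l : ℝ} (hα : 0 < α) (hl : 0 < l) {a b : ℝ}
    (ha : 0 < a) (hab : a ≤ b) (hb : b < 1) :
    BCmeasure α l (Ioc a b) = ENNReal.ofReal (BCcdf α l b - BCcdf α l a) := by
  have hsub : Ioc a b ⊆ Ioo (0:ℝ) 1 :=
    fun x hx => ⟨lt_of_lt_of_le ha hx.1.le, lt_of_le_of_lt hx.2 hb⟩
  rw [BCmeasure_apply _ _ measurableSet_Ioc, inter_eq_left.mpr hsub]
  have hInt : IntegrableOn (BCpdf α l) (Ioc a b) volume := by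
    have hIcc : Icc a b ⊆ Ioo (0:ℝ) 1 :=
      fun x hx => ⟨lt_of_lt_of_le ha hx.1, lt_of_le_of_lt hx.2 hb⟩
    exact (((BCpdf_contOn (l := l) hα).mono hIcc).integrableOn_Icc).mono_set Ioc_subset_Icc_self
  have hnn : 0 ≤ᵐ[volume.restrict (Ioc a b)] BCpdf α l := by
    rw [EventuallyLE, ae_restrict_iff' measurableSet_Ioc]
    exact Eventually.of_forall (fun x hx => BCpdf_nonneg hα hl (hsub hx))
  rw [← ofReal_integral_eq_lintegral_ofReal hInt hnn,
    ← intervalIntegral.integral_of_le hab, BC_integral hα hl ha hab hb]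

lemma BCmeasure_Ioc_zero {α l : ℝ} (hα : 0 < α) (hl : 0 < l) {t : ℝ} (ht : t ∈ Ioo (0:ℝ) 1) :
    BCmeasure α l (Ioc 0 t) = ENNReal.ofReal (BCcdf α l t) := by
  have ht0 : (0:ℝ) < t := ht.1
  set s : ℕ → Set ℝ := fun n => Ioc (t / (n + 1)) t with hs
  have hmono : Monotone s := by
    intro n m hnm
    apply Ioc_subset_Ioc_left
    apply div_le_div_of_nonneg_left ht0.le (by positivity)
    exact_mod_cast by exact_mod_cast add_le_add_left (Nat.cast_le.mpr hnm) 1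
  have hUnion : (⋃ n, s n) = Ioc 0 t := by
    ext x
    simp only [mem_iUnion, hs, mem_Ioc]
    constructor
    · rintro ⟨n, h1, h2⟩
      exact ⟨lt_of_le_of_lt (by positivity) h1, h2⟩
    · rintro ⟨hx0, hxt⟩
      obtain ⟨n, hn⟩ := exists_nat_gt (t / x)
      refine ⟨n, ?_, hxt⟩
      rw [div_lt_iff₀ (by positivity)]
      rw [div_lt_iff₀ hx0] at hn
      nlinarith
  have hlim := tendsto_measure_iUnion_atTop (μ := BCmeasure α l) hmono
  rw [hUnion] at hlim
  have hlim2 : Tendsto (fun n : ℕ => BCmeasure α l (s n)) atTop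
      (nhds (ENNReal.ofReal (BCcdf α l t))) := by
    have hval : ∀ n : ℕ, BCmeasure α l (s n)
        = ENNReal.ofReal (BCcdf α l t - BCcdf α l (t / (n + 1))) := by
      intro n
      exact BCmeasure_Ioc hα hl (by positivity)
        (div_le_self ht0.le (by exact_mod_cast Nat.le_add_left 1 n)) ht.2
    simp only [hval]
    have hseq : Tendsto (fun n : ℕ => t / (n + 1)) atTop (nhdsWithin 0 (Ioi (0:ℝ))) := by
      apply tendsto_nhdsWithin_of_tendsto_nhds_of_eventually_within
      · have := tendsto_one_div_add_atTop_nhds_zero_nat.const_mul t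
        simpa [div_eq_mul_inv, mul_comm, one_div] using this
      · exact Eventually.of_forall (fun n => mem_Ioi.mpr (by positivity))
    have hF : Tendsto (fun n : ℕ => BCcdf α l (t / (n + 1))) atTop (nhds 0) :=
      (BC_tendsto_zero hα hl).comp hseq
    have h5 : Tendsto (fun n : ℕ => BCcdf α l t - BCcdf α l (t / (n + 1))) atTop
        (nhds (BCcdf α l t - 0)) := (tendsto_const_nhds (x := BCcdf α l t)).sub hF
    rw [sub_zero] at h5
    exact (ENNReal.continuous_ofReal.continuousAt).tendsto.comp h5
  exact tendsto_nhds_unique hlim hlim2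

lemma BCmeasure_Ioo {α l : ℝ} (hα : 0 < α) (hl : 0 < l) :
    BCmeasure α l (Ioo (0:ℝ) 1) = 1 := by
  set s : ℕ → Set ℝ := fun n => Ioc 0 (1 - 1 / (n + 2)) with hs
  have hmem : ∀ n : ℕ, (1 - 1 / ((n:ℝ) + 2)) ∈ Ioo (0:ℝ) 1 := by
    intro n
    constructor
    · have : 1 / ((n:ℝ) + 2) ≤ 1 / 2 := by
        apply div_le_div_of_nonneg_left (by norm_num) (by norm_num)
        exact_mod_cast by exact_mod_cast le_add_of_nonneg_left (Nat.cast_nonneg n)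
      linarith
    · have : 0 < 1 / ((n:ℝ) + 2) := by positivity
      linarith
  have hmono : Monotone s := by
    intro n m hnm
    apply Ioc_subset_Ioc_right
    have : 1 / ((m:ℝ) + 2) ≤ 1 / ((n:ℝ) + 2) := by
      apply div_le_div_of_nonneg_left (by norm_num) (by positivity)
      have : (n:ℝ) ≤ m := Nat.cast_le.mpr hnm
      linarith
    linarith
  have hUnion : (⋃ n, s n) = Ioo (0:ℝ) 1 := by
    ext x
    simp only [mem_iUnion, hs, mem_Ioc, mem_Ioo]
    constructor
    · rintro ⟨n, h1, h2⟩
      refine ⟨h1, lt_of_le_of_lt h2 ?_⟩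
      have : 0 < 1 / ((n:ℝ) + 2) := by positivity
      linarith
    · rintro ⟨hx0, hx1⟩
      obtain ⟨n, hn⟩ := exists_nat_gt (1 / (1 - x))
      refine ⟨n, hx0, ?_⟩
      rw [div_lt_iff₀ (by linarith)] at hn
      have hn2 : 1 / ((n:ℝ) + 2) < 1 - x := by
        rw [div_lt_iff₀ (by positivity)]
        nlinarith [(Nat.cast_nonneg n : (0:ℝ) ≤ n)]
      linarith
  have hlim := tendsto_measure_iUnion_atTop (μ := BCmeasure α l) hmono
  rw [hUnion] at hlim
  have hlim2 : Tendsto (fun n : ℕ => BCmeasure α l (s n)) atTop (nhds 1) := by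
    have hval : ∀ n : ℕ, BCmeasure α l (s n)
        = ENNReal.ofReal (BCcdf α l (1 - 1 / (n + 2))) :=
      fun n => BCmeasure_Ioc_zero hα hl (hmem n)
    simp only [hval]
    have hseq : Tendsto (fun n : ℕ => 1 - 1 / ((n:ℝ) + 2)) atTop
        (nhdsWithin 1 (Iio (1:ℝ))) := by
      apply tendsto_nhdsWithin_of_tendsto_nhds_of_eventually_within
      · have h0 : Tendsto (fun n : ℕ => 1 / ((n:ℝ) + 2)) atTop (nhds 0) := by
          have h1 := (tendsto_one_div_add_atTop_nhds_zero_nat (𝕜 := ℝ)).comp (tendsto_add_atTop_nat 1)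
          refine h1.congr fun n => ?_
          simp only [Function.comp_apply]
          push_cast
          ring
        have h6 : Tendsto (fun n : ℕ => 1 - 1 / ((n:ℝ) + 2)) atTop (nhds (1 - 0)) :=
          (tendsto_const_nhds (x := (1:ℝ))).sub h0
        rw [sub_zero] at h6
        exact h6
      · refine Eventually.of_forall (fun n => ?_)
        have : 0 < 1 / ((n:ℝ) + 2) := by positivity
        simp only [mem_Iio]
        linarith
    have hF : Tendsto (fun n : ℕ => BCcdf α l (1 - 1 / ((n:ℝ) + 2))) atTop (nhds 1) :=
      (BC_tendsto_one hα hl).comp hseq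
    have := (ENNReal.continuous_ofReal.continuousAt).tendsto.comp hF
    simpa [Function.comp_def] using this
  exact tendsto_nhds_unique hlim hlim2

/-- Binary Concrete reparameterization: `σ((log α + L)/λ)` with `L` standard Logistic
takes values in `(0,1)` and has the Binary Concrete density. -/
theorem binary_concrete_reparameterization
    {Ω : Type*} [MeasurableSpace Ω] (P : Measure Ω) [IsProbabilityMeasure P]
    (α l : ℝ) (hα : 0 < α) (hl : 0 < l)
    (L : Ω → ℝ) (hL : Measurable L)
    (hLogistic : ∀ t : ℝ, P {ω | L ω ≤ t} = ENNReal.ofReal (1 / (1 + Real.exp (-t))))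
    (X : Ω → ℝ)
    (hX : ∀ ω, X ω = 1 / (1 + Real.exp (-((Real.log α + L ω) / l)))) :
    (∀ ω, X ω ∈ Set.Ioo (0 : ℝ) 1) ∧
    Measure.map X P
      = (volume.restrict (Set.Ioo (0 : ℝ) 1)).withDensity
          (fun x => ENNReal.ofReal
            (l * α * x ^ (-l - 1) * (1 - x) ^ (-l - 1) /
              (α * x ^ (-l) + (1 - x) ^ (-l)) ^ 2)) := by
  have hrange : ∀ ω, X ω ∈ Set.Ioo (0 : ℝ) 1 := by
    intro ω
    rw [hX ω]
    have hE := Real.exp_pos (-((Real.log α + L ω) / l))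
    constructor
    · positivity
    · rw [div_lt_one (by linarith)]
      linarith
  refine ⟨hrange, ?_⟩
  have hXmeas : Measurable X := by
    have hXeq : X = fun ω => 1 / (1 + Real.exp (-((Real.log α + L ω) / l))) := funext hX
    rw [hXeq]
    exact measurable_const.div
      (measurable_const.add (((measurable_const.add hL).div_const l).neg.exp))
  show Measure.map X P = BCmeasure α l
  refine Measure.ext_of_Iic _ _ (fun t => ?_)
  rw [Measure.map_apply hXmeas measurableSet_Iic]
  rcases le_or_gt t 0 with ht0 | ht0
  · have hpre : X ⁻¹' Iic t = ∅ := by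
      ext ω
      simp only [mem_preimage, mem_Iic, mem_empty_iff_false, iff_false, not_le]
      exact lt_of_le_of_lt ht0 (hrange ω).1
    have hset : Iic t ∩ Ioo (0:ℝ) 1 = ∅ := by
      ext x
      simp only [mem_inter_iff, mem_Iic, mem_Ioo, mem_empty_iff_false, iff_false, not_and]
      intro hx hx0
      exact absurd (lt_of_lt_of_le hx0 (le_trans hx ht0)) (lt_irrefl 0)
    rw [hpre, measure_empty, BCmeasure_apply _ _ measurableSet_Iic, hset]
    simp
  rcases lt_or_ge t 1 with ht1 | ht1
  · -- main case 0 < t < 1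
    have htIoo : t ∈ Ioo (0:ℝ) 1 := ⟨ht0, ht1⟩
    have h1t : (0:ℝ) < 1 - t := by linarith
    set c := Real.log (t / (1 - t)) with hc
    set g := l * c - Real.log α with hg
    have hpre : X ⁻¹' Iic t = {ω | L ω ≤ g} := by
      ext ω
      simp only [mem_preimage, mem_Iic, mem_setOf_eq, hX ω]
      set s := (Real.log α + L ω) / l with hsdef
      have hE := Real.exp_pos (-s)
      have hlogdiv : Real.log ((1 - t) / t) = Real.log (1 - t) - Real.log t :=
        Real.log_div h1t.ne' ht0.ne'
      have hlogdiv2 : c = Real.log t - Real.log (1 - t) := by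
        rw [hc, Real.log_div ht0.ne' h1t.ne']
      rw [div_le_iff₀ (by linarith)]
      constructor
      · intro h
        have h2 : (1 - t) / t ≤ Real.exp (-s) := by
          rw [div_le_iff₀ ht0]; nlinarith
        have h3 : Real.log ((1 - t) / t) ≤ -s :=
          (Real.log_le_iff_le_exp (by positivity)).mpr h2
        have h4 : s ≤ c := by rw [hlogdiv2]; rw [hlogdiv] at h3; linarith
        have h5 : Real.log α + L ω ≤ c * l := (div_le_iff₀ hl).mp h4
        rw [hg]; nlinarith [h5]
      · intro h
        have h5 : Real.log α + L ω ≤ c * l := by rw [hg] at h; nlinarith [h]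
        have h4 : s ≤ c := (div_le_iff₀ hl).mpr h5
        have h3 : Real.log ((1 - t) / t) ≤ -s := by
          rw [hlogdiv]; rw [hlogdiv2] at h4; linarith
        have h2 : (1 - t) / t ≤ Real.exp (-s) :=
          (Real.log_le_iff_le_exp (by positivity)).mp h3
        rw [div_le_iff₀ ht0] at h2
        nlinarith
    rw [hpre, hLogistic g]
    have hset : Iic t ∩ Ioo (0:ℝ) 1 = Ioc 0 t := by
      ext x
      simp only [mem_inter_iff, mem_Iic, mem_Ioo, mem_Ioc]
      constructor
      · rintro ⟨h1, h2, h3⟩; exact ⟨h2, h1⟩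
      · rintro ⟨h1, h2⟩; exact ⟨h2, h1, lt_of_le_of_lt h2 ht1⟩
    have hset2 : Ioc (0:ℝ) t ∩ Ioo (0:ℝ) 1 = Ioc 0 t := by
      apply inter_eq_left.mpr
      exact fun x hx => ⟨hx.1, lt_of_le_of_lt hx.2 ht1⟩
    have hR : BCmeasure α l (Iic t) = ENNReal.ofReal (BCcdf α l t) := by
      rw [BCmeasure_apply _ _ measurableSet_Iic, hset,
        ← hset2, ← BCmeasure_apply _ _ measurableSet_Ioc, BCmeasure_Ioc_zero hα hl htIoo]
    rw [hR]
    congr 1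
    have he : Real.exp (-g) = α * t ^ (-l) * (1 - t) ^ l := by
      have hdivpos : (0:ℝ) < t / (1 - t) := div_pos ht0 h1t
      have hcl : Real.exp (l * c) = (t / (1 - t)) ^ l := by
        rw [hc, Real.rpow_def_of_pos hdivpos, mul_comm]
      rw [hg, neg_sub, Real.exp_sub, hcl, Real.exp_log hα,
        Real.div_rpow ht0.le h1t.le, Real.rpow_neg ht0.le]
      have hpt : (0:ℝ) < t ^ l := Real.rpow_pos_of_pos ht0 l
      have hp1t : (0:ℝ) < (1 - t) ^ l := Real.rpow_pos_of_pos h1t l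
      field_simp
    rw [he, BC_key hα htIoo]
  · -- case 1 ≤ t
    have hpre : X ⁻¹' Iic t = univ := by
      ext ω
      simp only [mem_preimage, mem_Iic, mem_univ, iff_true]
      exact le_trans (hrange ω).2.le ht1
    have hset : Iic t ∩ Ioo (0:ℝ) 1 = Ioo (0:ℝ) 1 := by
      apply inter_eq_right.mpr
      exact fun x hx => le_trans hx.2.le ht1
    rw [hpre, measure_univ, BCmeasure_apply _ _ measurableSet_Iic, hset]
    have : (∫⁻ x in Ioo (0:ℝ) 1, ENNReal.ofReal (BCpdf α l x)) = BCmeasure α l (Ioo 0 1) := by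
      rw [BCmeasure_apply _ _ measurableSet_Ioo, inter_self]
    rw [this, BCmeasure_Ioo hα hl]
end

section
/- (Binary rounding) If X ~ BinaryConcrete(α, λ), i.e., X = σ((log α + L)/λ) with L standard Logistic, then P(X > 1/2) = α/(1+α). -/
open MeasureTheory Real

/-- Binary rounding: `P(X > 1/2) = α/(1+α)` for `X ~ BinaryConcrete(α, λ)`. -/
theorem binary_concrete_rounding
    {Ω : Type*} [MeasurableSpace Ω] (P : Measure Ω) [IsProbabilityMeasure P]
    (α l : ℝ) (hα : 0 < α) (hl : 0 < l)
    (L : Ω → ℝ) (hL : Measurable L)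
    (hLogistic : ∀ t : ℝ, P {ω | L ω ≤ t} = ENNReal.ofReal (1 / (1 + Real.exp (-t)))) :
    P {ω | 1 / 2 < 1 / (1 + Real.exp (-((Real.log α + L ω) / l)))}
      = ENNReal.ofReal (α / (1 + α)) := by
  have hset : {ω | 1 / 2 < 1 / (1 + Real.exp (-((Real.log α + L ω) / l)))}
      = {ω | L ω ≤ -Real.log α}ᶜ := by
    ext ω
    simp only [Set.mem_setOf_eq, Set.mem_compl_iff, not_le]
    have hpos : 0 < 1 + Real.exp (-((Real.log α + L ω) / l)) := by positivity
    rw [div_lt_div_iff₀ (by norm_num) hpos]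
    constructor
    · intro h
      have h1 : Real.exp (-((Real.log α + L ω) / l)) < 1 := by linarith
      rw [Real.exp_lt_one_iff] at h1
      have : 0 < (Real.log α + L ω) / l := by linarith
      have := (div_pos_iff_of_pos_right hl).mp this
      linarith
    · intro h
      have : 0 < (Real.log α + L ω) / l := div_pos (by linarith) hl
      have h1 : Real.exp (-((Real.log α + L ω) / l)) < 1 := by
        rw [Real.exp_lt_one_iff]; linarith
      linarith
  rw [hset, measure_compl (by exact (hL measurableSet_Iic)) (measure_ne_top P _),
    measure_univ, hLogistic, neg_neg, Real.exp_log hα]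
  rw [← ENNReal.ofReal_one, ← ENNReal.ofReal_sub _ (by positivity)]
  congr 1
  field_simp
  ring
end

section
/- (Binary log-convexity) If 0 < λ ≤ 1, then the Binary Concrete density p_{α,λ}(x) = λ α x^{-λ-1}(1-x)^{-λ-1}/(α x^{-λ} + (1-x)^{-λ})² is log-convex in x on (0,1), for every α > 0. -/
open Real

/-- Multiplying a concave function by a nonpositive constant gives a convex function. -/
lemma aux_mul_nonpos_concave {c : ℝ} {s : Set ℝ} {f : ℝ → ℝ} (hc : c ≤ 0)
    (h : ConcaveOn ℝ s f) : ConvexOn ℝ s fun x => c * f x := by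
  refine ⟨h.1, fun x hx y hy a b ha hb hab => ?_⟩
  have h2 := h.2 hx hy ha hb hab
  simp only [smul_eq_mul] at *
  nlinarith [mul_le_mul_of_nonpos_left h2 hc]

/-- Precomposition with `x ↦ 1 - x` preserves concavity. -/
lemma aux_concave_one_sub {t : Set ℝ} {f : ℝ → ℝ} (hf : ConcaveOn ℝ t f)
    {s : Set ℝ} (hs : Convex ℝ s) (hst : ∀ x ∈ s, 1 - x ∈ t) :
    ConcaveOn ℝ s fun x => f (1 - x) := by
  refine ⟨hs, fun x hx y hy a b ha hb hab => ?_⟩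
  have key : a • (1 - x) + b • (1 - y) = 1 - (a • x + b • y) := by
    simp only [smul_eq_mul]; linear_combination hab
  have h2 := hf.2 (hst x hx) (hst y hy) ha hb hab
  rwa [key] at h2

/-- Binary log-convexity: for `0 < λ ≤ 1` the Binary Concrete density is log-convex
on `(0,1)`. -/
theorem binary_concrete_log_convex
    (α l : ℝ) (hα : 0 < α) (hl : 0 < l) (hl1 : l ≤ 1) :
    ConvexOn ℝ (Set.Ioo (0 : ℝ) 1)
      (fun x => Real.log
        (l * α * x ^ (-l - 1) * (1 - x) ^ (-l - 1) /
          (α * x ^ (-l) + (1 - x) ^ (-l)) ^ 2)) := by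
  have hs : Convex ℝ (Set.Ioo (0 : ℝ) 1) := convex_Ioo 0 1
  have hsub : Set.Ioo (0 : ℝ) 1 ⊆ Set.Ioi 0 := Set.Ioo_subset_Ioi_self
  have hlog : ConcaveOn ℝ (Set.Ioi (0 : ℝ)) Real.log := strictConcaveOn_log_Ioi.concaveOn
  have hlog' : ConcaveOn ℝ (Set.Ioo (0 : ℝ) 1) Real.log := hlog.subset hsub hs
  have h1sub : ∀ x ∈ Set.Ioo (0 : ℝ) 1, (1 : ℝ) - x ∈ Set.Ioi (0 : ℝ) := by
    intro x hx; exact Set.mem_Ioi.2 (by linarith [hx.2])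
  have hlog1 : ConcaveOn ℝ (Set.Ioo (0 : ℝ) 1) (fun x => Real.log (1 - x)) :=
    aux_concave_one_sub hlog hs h1sub
  have hpow : ConcaveOn ℝ (Set.Ici (0 : ℝ)) (fun x : ℝ => x ^ l) :=
    Real.concaveOn_rpow hl.le hl1
  have hpow1 : ConcaveOn ℝ (Set.Ioo (0 : ℝ) 1) (fun x : ℝ => x ^ l) :=
    hpow.subset (fun x hx => le_of_lt hx.1) hs
  have hpow2 : ConcaveOn ℝ (Set.Ioo (0 : ℝ) 1) (fun x : ℝ => (1 - x) ^ l) :=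
    aux_concave_one_sub hpow hs (fun x hx => Set.mem_Ici.2 (by linarith [hx.2]))
  -- concavity of the inner function
  have hinner : ConcaveOn ℝ (Set.Ioo (0 : ℝ) 1)
      (fun x : ℝ => α * (1 - x) ^ l + x ^ l) := by
    refine ConcaveOn.add ?_ hpow1
    have := hpow2.smul hα.le
    simpa [smul_eq_mul] using this
  have hposinner : ∀ x ∈ Set.Ioo (0 : ℝ) 1, 0 < α * (1 - x) ^ l + x ^ l := by
    intro x hx
    have hx0 : 0 < x := hx.1
    have hx1 : 0 < 1 - x := by linarith [hx.2]
    positivity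
  -- log of the positive concave inner function is concave
  have hloginner : ConcaveOn ℝ (Set.Ioo (0 : ℝ) 1)
      (fun x : ℝ => Real.log (α * (1 - x) ^ l + x ^ l)) := by
    refine ⟨hs, fun x hx y hy a b ha hb hab => ?_⟩
    simp only [smul_eq_mul]
    have hu := hposinner x hx
    have hv := hposinner y hy
    set u := α * (1 - x) ^ l + x ^ l with hu_def
    set v := α * (1 - y) ^ l + y ^ l with hv_def
    have hcomb : 0 < a * u + b * v := by
      rcases ha.lt_or_eq with h | h
      · nlinarith [mul_nonneg hb hv.le]
      · have hb1 : b = 1 := by linarith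
        rw [← h, hb1]; simpa using hv
    have hconc := hinner.2 hx hy ha hb hab
    simp only [smul_eq_mul] at hconc
    calc a * Real.log u + b * Real.log v
        ≤ Real.log (a * u + b * v) := by
          have := hlog.2 (Set.mem_Ioi.2 hu) (Set.mem_Ioi.2 hv) ha hb hab
          simpa [smul_eq_mul] using this
      _ ≤ Real.log (α * (1 - (a * x + b * y)) ^ l + (a * x + b * y) ^ l) :=
          Real.log_le_log hcomb hconc
  -- the convex comparison function
  have hg : ConvexOn ℝ (Set.Ioo (0 : ℝ) 1)
      (fun x : ℝ => Real.log (l * α) + ((l - 1) * Real.log x +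
        ((l - 1) * Real.log (1 - x) + (-2) * Real.log (α * (1 - x) ^ l + x ^ l)))) := by
    refine (convexOn_const _ hs).add (ConvexOn.add ?_ (ConvexOn.add ?_ ?_))
    · exact aux_mul_nonpos_concave (by linarith) hlog'
    · exact aux_mul_nonpos_concave (by linarith) hlog1
    · exact aux_mul_nonpos_concave (by norm_num) hloginner
  refine hg.congr ?_
  intro x hx
  have hx0 : 0 < x := hx.1
  have hx1 : 0 < 1 - x := by linarith [hx.2]
  have ha : (0 : ℝ) < x ^ l := Real.rpow_pos_of_pos hx0 l
  have hb : (0 : ℝ) < (1 - x) ^ l := Real.rpow_pos_of_pos hx1 l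
  have hP : 0 < α * (1 - x) ^ l + x ^ l := by positivity
  have e1 : x ^ (-l - 1) = (x ^ l)⁻¹ * x⁻¹ := by
    rw [show -l - 1 = -l + (-1) by ring, Real.rpow_add hx0, Real.rpow_neg hx0.le,
      Real.rpow_neg_one]
  have e2 : (1 - x) ^ (-l - 1) = ((1 - x) ^ l)⁻¹ * (1 - x)⁻¹ := by
    rw [show -l - 1 = -l + (-1) by ring, Real.rpow_add hx1, Real.rpow_neg hx1.le,
      Real.rpow_neg_one]
  have e3 : x ^ (-l) = (x ^ l)⁻¹ := Real.rpow_neg hx0.le l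
  have e4 : (1 - x) ^ (-l) = ((1 - x) ^ l)⁻¹ := Real.rpow_neg hx1.le l
  have hstep : l * α * x ^ (-l - 1) * (1 - x) ^ (-l - 1) /
      (α * x ^ (-l) + (1 - x) ^ (-l)) ^ 2
      = l * α * (x ^ l * (1 - x) ^ l) /
        (x * (1 - x) * (α * (1 - x) ^ l + x ^ l) ^ 2) := by
    rw [e1, e2, e3, e4]
    have hden : α * (x ^ l)⁻¹ + ((1 - x) ^ l)⁻¹ ≠ 0 := by positivity
    field_simp
  symm
  show Real.log _ = _
  have hla : l * α ≠ 0 := by positivity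
  rw [hstep, Real.log_div (by positivity) (by positivity),
    Real.log_mul hla (mul_pos ha hb).ne',
    Real.log_mul hl.ne' hα.ne',
    Real.log_mul ha.ne' hb.ne',
    Real.log_mul (mul_pos hx0 hx1).ne' (pow_ne_zero 2 hP.ne'),
    Real.log_mul hx0.ne' hx1.ne',
    Real.log_pow, Real.log_rpow hx0, Real.log_rpow hx1]
  push_cast
  ring
end
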